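/- arXiv:2007.14829 — 2 statements merged into one kernel-verified Lean document; each statement's English description precedes it below -/
import Mathlib

section
/- Let 0 < ε < 1, set c = (ε / (3·binom(m,s)))^{1/s}, α = 1 − 1/s, and p = c·Q^{−α}, and assume 0 < p < 1. Then E[X] ≤ ε/3 + 3^m · Q^{−2/s}. -/
open scoped Classical
noncomputable section

variable {F : Type} [Field F]

/-- Projective points of `F^k`. -/
abbrev Pt (F : Type) [Field F] (k : ℕ) := Projectivization F (Fin k → F)

/-- Linear span of a set of projective points. -/
def pspan {k : ℕ} (T : Set (Pt F k)) : Submodule F (Fin k → F) :=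
  ⨆ x ∈ T, x.submodule

/-- A finite set of projective points is dependent if the dimension of its linear span is
at most its cardinality minus one. -/
def Dep {k : ℕ} (T : Finset (Pt F k)) : Prop :=
  Module.finrank F (pspan (T : Set (Pt F k))) + 1 ≤ T.card

/-- A circuit is a dependent set that is minimal with respect to inclusion. -/
def IsCircuit {k : ℕ} (T : Finset (Pt F k)) : Prop :=
  Dep T ∧ ∀ T' ⊂ T, ¬ Dep T'

/-- A crossing circuit (for the line configuration `L`): a circuit contained in the union
of the lines which contains at most one point on each line. -/
def CrossingCircuit {k m : ℕ} (L : Fin m → Submodule F (Fin k → F))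
    (T : Finset (Pt F k)) : Prop :=
  IsCircuit T ∧ (∀ x ∈ T, ∃ i, x.submodule ≤ L i) ∧
    ∀ i, (T.filter fun x => x.submodule ≤ L i).card ≤ 1

/-- Weight of the subset `Γ` of `ΩF` under the product Bernoulli(`p`) measure on the
subsets of `ΩF`. -/
def bwt (p : ℝ) {k : ℕ} (ΩF Γ : Finset (Pt F k)) : ℝ :=
  p ^ Γ.card * (1 - p) ^ (ΩF.card - Γ.card)

/-- Expectation of the random variable `Y` under the product Bernoulli(`p`) measure `μ_p`
on the subsets of `ΩF`. -/
def expec (p : ℝ) {k : ℕ} (ΩF : Finset (Pt F k)) (Y : Finset (Pt F k) → ℝ) : ℝ :=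
  ∑ Γ ∈ ΩF.powerset, bwt p ΩF Γ * Y Γ

/-- Probability of the event `E` under the product Bernoulli(`p`) measure `μ_p` on the
subsets of `ΩF`. -/
def prob (p : ℝ) {k : ℕ} (ΩF : Finset (Pt F k)) (E : Finset (Pt F k) → Prop) : ℝ :=
  ∑ Γ ∈ ΩF.powerset.filter E, bwt p ΩF Γ

/-- `V_i(Γ)`: the number of points of `Γ` on the line `L`. -/
def Vline {k : ℕ} (L : Submodule F (Fin k → F)) (Γ : Finset (Pt F k)) : ℕ :=
  (Γ.filter fun x => x.submodule ≤ L).card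

/-- `X_u(Γ)`: the number of pairs `(D, J)` with `D ⊆ Ω` a crossing circuit of size `u` and
`J ⊆ D ∩ Γ` of size `2u - k`. -/
def Xu {k m : ℕ} (L : Fin m → Submodule F (Fin k → F)) (u : ℕ)
    (Γ : Finset (Pt F k)) : ℕ :=
  Set.ncard {DJ : Finset (Pt F k) × Finset (Pt F k) |
    CrossingCircuit L DJ.1 ∧ DJ.1.card = u ∧
    DJ.2 ⊆ DJ.1 ∩ Γ ∧ DJ.2.card = 2 * u - k}

/-- `X = ∑_{u = ⌈(k+1)/2⌉}^{m} X_u`. -/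
def Xtot {k m : ℕ} (L : Fin m → Submodule F (Fin k → F)) (Γ : Finset (Pt F k)) : ℕ :=
  ∑ u ∈ Finset.Icc ((k + 2) / 2) m, Xu L u Γ


-- §1 probability lemmas
lemma sum_bern {X : Type} (p : ℝ) (s : Finset X) :
    ∑ Γ ∈ s.powerset, p ^ Γ.card * (1 - p) ^ (s.card - Γ.card) = 1 := by
  have h := Finset.prod_add (fun _ : X => p) (fun _ : X => 1 - p) s
  simp only [Finset.prod_const] at h
  have : ∀ Γ ∈ s.powerset, p ^ Γ.card * (1 - p) ^ (s.card - Γ.card)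
      = p ^ Γ.card * (1 - p) ^ (s \ Γ).card := by
    intro Γ hΓ
    rw [Finset.card_sdiff_of_subset (Finset.mem_powerset.mp hΓ)]
  rw [Finset.sum_congr rfl this, ← h]
  simp

lemma expec_indicator (p : ℝ) {k : ℕ} (ΩF J : Finset (Pt F k)) (hJ : J ⊆ ΩF) :
    expec p ΩF (fun Γ => if J ⊆ Γ then (1 : ℝ) else 0) = p ^ J.card := by
  unfold expec bwt
  rw [← Finset.sum_filter_add_sum_filter_not _ (fun Γ => J ⊆ Γ)]
  have h2 : ∑ Γ ∈ ΩF.powerset.filter (fun Γ => ¬ J ⊆ Γ),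
      p ^ Γ.card * (1 - p) ^ (ΩF.card - Γ.card) * (if J ⊆ Γ then (1:ℝ) else 0) = 0 := by
    apply Finset.sum_eq_zero
    intro Γ hΓ
    simp only [Finset.mem_filter] at hΓ
    rw [if_neg hΓ.2, mul_zero]
  rw [h2, add_zero]
  have h1 : ∀ Γ ∈ ΩF.powerset.filter (fun Γ => J ⊆ Γ),
      p ^ Γ.card * (1 - p) ^ (ΩF.card - Γ.card) * (if J ⊆ Γ then (1:ℝ) else 0)
      = p ^ Γ.card * (1 - p) ^ (ΩF.card - Γ.card) := by
    intro Γ hΓ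
    simp only [Finset.mem_filter] at hΓ
    rw [if_pos hΓ.2, mul_one]
  rw [Finset.sum_congr rfl h1]
  -- bijection Γ ↦ Γ \ J with powerset of ΩF \ J
  have key : ∑ Γ ∈ ΩF.powerset.filter (fun Γ => J ⊆ Γ),
      p ^ Γ.card * (1 - p) ^ (ΩF.card - Γ.card)
      = ∑ Γ' ∈ (ΩF \ J).powerset, p ^ (Γ'.card + J.card) * (1 - p) ^ ((ΩF \ J).card - Γ'.card) := by
    apply Finset.sum_nbij' (fun Γ => Γ \ J) (fun Γ' => Γ' ∪ J)
    · intro Γ hΓ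
      simp only [Finset.mem_filter, Finset.mem_powerset] at hΓ ⊢
      exact Finset.sdiff_subset_sdiff hΓ.1 (le_refl _)
    · intro Γ' hΓ'
      simp only [Finset.mem_filter, Finset.mem_powerset] at hΓ' ⊢
      constructor
      · exact Finset.union_subset (hΓ'.trans (Finset.sdiff_subset)) hJ
      · exact Finset.subset_union_right
    · intro Γ hΓ
      simp only [Finset.mem_filter, Finset.mem_powerset] at hΓ
      rw [Finset.sdiff_union_of_subset hΓ.2]
    · intro Γ' hΓ'
      simp only [Finset.mem_powerset] at hΓ'
      rw [Finset.union_sdiff_right]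
      exact Finset.sdiff_eq_self_of_disjoint (Finset.disjoint_of_subset_left hΓ' Finset.sdiff_disjoint) |>.symm ▸ rfl
    · intro Γ hΓ
      simp only [Finset.mem_filter, Finset.mem_powerset] at hΓ
      have hc : (Γ \ J).card = Γ.card - J.card := Finset.card_sdiff_of_subset hΓ.2
      have hJc : J.card ≤ Γ.card := Finset.card_le_card hΓ.2
      have hΓc : Γ.card ≤ ΩF.card := Finset.card_le_card hΓ.1
      rw [hc, Finset.card_sdiff_of_subset hJ]
      congr 1
      · congr 1; omega
      · congr 1; omega
  rw [key]
  have : ∀ Γ' ∈ (ΩF \ J).powerset, p ^ (Γ'.card + J.card) * (1 - p) ^ ((ΩF \ J).card - Γ'.card)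
      = p ^ J.card * (p ^ Γ'.card * (1 - p) ^ ((ΩF \ J).card - Γ'.card)) := by
    intro Γ' _; ring
  rw [Finset.sum_congr rfl this, ← Finset.mul_sum, sum_bern, mul_one]

lemma expec_sum (p : ℝ) {k : ℕ} (ΩF : Finset (Pt F k)) {A : Type} (s : Finset A)
    (f : A → Finset (Pt F k) → ℝ) :
    expec p ΩF (fun Γ => ∑ z ∈ s, f z Γ) = ∑ z ∈ s, expec p ΩF (f z) := by
  unfold expec
  rw [Finset.sum_comm]
  apply Finset.sum_congr rfl
  intro Γ _
  rw [Finset.mul_sum]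

-- extract a concrete independent family from hgen
lemma indep4 {m k : ℕ} (P Q : Fin m → (Fin k → F)) (hk4 : 4 ≤ k)
    (hgen : ∀ T : Finset (Fin m ⊕ Fin m), T.card ≤ k →
      LinearIndependent F (fun t : {x // x ∈ T} => Sum.elim P Q (t : Fin m ⊕ Fin m)))
    {i j : Fin m} (hij : i ≠ j) :
    LinearIndependent F ![P i, Q i, P j, Q j] := by
  set T : Finset (Fin m ⊕ Fin m) := {Sum.inl i, Sum.inr i, Sum.inl j, Sum.inr j} with hT
  have hmem1 : Sum.inl i ∈ T := by simp [hT]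
  have hmem2 : Sum.inr i ∈ T := by simp [hT]
  have hmem3 : Sum.inl j ∈ T := by simp [hT]
  have hmem4 : Sum.inr j ∈ T := by simp [hT]
  have hcard : T.card ≤ k := by
    refine le_trans ?_ hk4
    rw [hT]
    refine le_trans (Finset.card_insert_le _ _) ?_
    have h2 := Finset.card_insert_le (Sum.inr i) ({Sum.inl j, Sum.inr j} : Finset (Fin m ⊕ Fin m))
    have h3 := Finset.card_insert_le (Sum.inl j) ({Sum.inr j} : Finset (Fin m ⊕ Fin m))
    simp only [Finset.card_singleton] at *
    omega
  have hli := hgen T hcard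
  let f : Fin 4 → {x // x ∈ T} := ![⟨_, hmem1⟩, ⟨_, hmem2⟩, ⟨_, hmem3⟩, ⟨_, hmem4⟩]
  have hfinj : Function.Injective f := by
    intro a b hab
    fin_cases a <;> fin_cases b <;> simp_all [f]
  have := hli.comp f hfinj
  convert this using 1
  funext n
  fin_cases n <;> simp [f]

lemma line_unique {m k : ℕ} (P Q : Fin m → (Fin k → F)) (hk4 : 4 ≤ k)
    (hgen : ∀ T : Finset (Fin m ⊕ Fin m), T.card ≤ k →
      LinearIndependent F (fun t : {x // x ∈ T} => Sum.elim P Q (t : Fin m ⊕ Fin m)))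
    (L : Fin m → Submodule F (Fin k → F)) (hL : ∀ i, L i = Submodule.span F {P i, Q i})
    (x : Projectivization F (Fin k → F)) {i j : Fin m}
    (hi : x.submodule ≤ L i) (hj : x.submodule ≤ L j) : i = j := by
  by_contra hij
  have hrep : x.rep ∈ x.submodule := by
    rw [Projectivization.submodule_eq]
    exact Submodule.mem_span_singleton_self _
  have h1 : x.rep ∈ L i := hi hrep
  have h2 : x.rep ∈ L j := hj hrep
  rw [hL i, Submodule.mem_span_pair] at h1
  rw [hL j, Submodule.mem_span_pair] at h2
  obtain ⟨a, b, hab⟩ := h1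
  obtain ⟨c, d, hcd⟩ := h2
  have hli := indep4 P Q hk4 hgen hij
  rw [Fintype.linearIndependent_iff] at hli
  have hsum : ∑ n : Fin 4, (![a, b, -c, -d] n : F) • (![P i, Q i, P j, Q j] n : Fin k → F) = 0 := by
    simp [Fin.sum_univ_four, hab]
    rw [← hcd]
    module
  have := hli ![a, b, -c, -d] hsum
  have ha : a = 0 := by simpa using this 0
  have hb : b = 0 := by simpa using this 1
  rw [ha, hb] at hab
  simp at hab
  exact Projectivization.rep_nonzero x hab.symm

-- §3 span / pspan lemmas
lemma pspan_eq {k : ℕ} (T : Set (Pt F k)) :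
    pspan T = Submodule.span F (Projectivization.rep '' T) := by
  unfold pspan
  rw [show Projectivization.rep '' T = ⋃ x ∈ T, {Projectivization.rep x} by
    ext y; simp [eq_comm]]
  rw [Submodule.span_iUnion₂]
  apply iSup_congr
  intro x
  apply iSup_congr
  intro _
  rw [Projectivization.submodule_eq]

lemma span_top {m k : ℕ} (P Q : Fin m → (Fin k → F))
    (hgen : ∀ T : Finset (Fin m ⊕ Fin m), T.card ≤ k →
      LinearIndependent F (fun t : {x // x ∈ T} => Sum.elim P Q (t : Fin m ⊕ Fin m)))
    (S : Finset (Fin m)) (hcard : k ≤ 2 * S.card) :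
    Submodule.span F ((fun z => Sum.elim P Q z) '' (↑(S.image Sum.inl ∪ S.image Sum.inr) : Set (Fin m ⊕ Fin m))) = ⊤ := by
  set B : Finset (Fin m ⊕ Fin m) := S.image Sum.inl ∪ S.image Sum.inr with hB
  have hBcard : B.card = 2 * S.card := by
    rw [hB, Finset.card_union_of_disjoint]
    · rw [Finset.card_image_of_injective _ Sum.inl_injective,
        Finset.card_image_of_injective _ Sum.inr_injective]; ring
    · simp [Finset.disjoint_left]
  obtain ⟨T, hTB, hTcard⟩ := Finset.exists_subset_card_eq (show k ≤ B.card by omega)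
  have hli := hgen T (le_of_eq hTcard)
  have h1 : Module.finrank F (Submodule.span F (Set.range (fun t : {x // x ∈ T} => Sum.elim P Q (t : Fin m ⊕ Fin m)))) = k := by
    rw [finrank_span_eq_card hli]
    simp [hTcard]
  have hle : Submodule.span F (Set.range (fun t : {x // x ∈ T} => Sum.elim P Q (t : Fin m ⊕ Fin m)))
      ≤ Submodule.span F ((fun z => Sum.elim P Q z) '' (↑B : Set (Fin m ⊕ Fin m))) := by
    apply Submodule.span_mono
    rintro _ ⟨t, rfl⟩
    exact ⟨t, by simpa using hTB t.2, rfl⟩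
  apply Submodule.eq_top_of_finrank_eq
  rw [Module.finrank_fin_fun]
  refine le_antisymm ?_ ?_
  · have := Submodule.finrank_le (Submodule.span F ((fun z => Sum.elim P Q z) '' (↑B : Set (Fin m ⊕ Fin m))))
    simpa [Module.finrank_fin_fun] using this
  · calc k = Module.finrank F (Submodule.span F (Set.range (fun t : {x // x ∈ T} => Sum.elim P Q (t : Fin m ⊕ Fin m)))) := h1.symm
      _ ≤ _ := Submodule.finrank_mono hle

-- §4 linear combination map, kernel
def lc {k : ℕ} {ι : Type} [Fintype ι] (v : ι → (Fin k → F)) : (ι → F) →ₗ[F] (Fin k → F) where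
  toFun w := ∑ i, w i • v i
  map_add' w₁ w₂ := by
    simp only [Pi.add_apply, add_smul]
    rw [Finset.sum_add_distrib]
  map_smul' a w := by
    simp only [Pi.smul_apply, smul_eq_mul, RingHom.id_apply, ← smul_smul]
    rw [Finset.smul_sum]

lemma lc_range {k : ℕ} {ι : Type} [Fintype ι] (v : ι → (Fin k → F)) :
    LinearMap.range (lc v) = Submodule.span F (Set.range v) := by
  ext x
  rw [LinearMap.mem_range, Submodule.mem_span_range_iff_exists_fun F]
  constructor
  · rintro ⟨w, rfl⟩; exact ⟨w, rfl⟩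
  · rintro ⟨w, rfl⟩; exact ⟨w, rfl⟩

lemma ker_finrank {k : ℕ} {ι : Type} [Fintype ι] (v : ι → (Fin k → F))
    (hspan : Submodule.span F (Set.range v) = ⊤) :
    Module.finrank F ↥(LinearMap.ker (lc v)) = Fintype.card ι - k
      ∧ k ≤ Fintype.card ι := by
  have h := LinearMap.finrank_range_add_finrank_ker (lc v)
  rw [lc_range, hspan, finrank_top, Module.finrank_fin_fun,
    Module.finrank_fintype_fun_eq_card] at h
  omega

lemma ker_card [Fintype F] {k : ℕ} {ι : Type} [Fintype ι] (v : ι → (Fin k → F))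
    (hspan : Submodule.span F (Set.range v) = ⊤) :
    Nat.card ↥(LinearMap.ker (lc v)) = (Fintype.card F) ^ (Fintype.card ι - k) := by
  obtain ⟨h1, _⟩ := ker_finrank v hspan
  haveI : Fintype ↥(LinearMap.ker (lc v)) := Fintype.ofFinite _
  rw [Nat.card_eq_fintype_card, Module.card_eq_pow_finrank (K := F), h1]

lemma pow_ineq (q : ℕ) (hq : 1 ≤ q) : ∀ t : ℕ, q ^ t ≤ (q - 1) * (q + 1) ^ (t - 1) + 1
  | 0 => by simp
  | 1 => by simp; omega
  | (n+2) => by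
    have ih := pow_ineq q hq (n + 1)
    show q ^ (n+2) ≤ (q - 1) * (q + 1) ^ (n+1) + 1
    simp only [Nat.add_sub_cancel] at ih
    obtain ⟨r, rfl⟩ : ∃ r, q = r + 1 := ⟨q - 1, by omega⟩
    simp only [Nat.add_sub_cancel] at ih ⊢
    have hA : 1 ≤ (r + 1 + 1) ^ n := Nat.one_le_pow _ _ (by omega)
    have h2 : (r+1) ^ (n+2) = (r+1) * (r+1)^(n+1) := by ring
    have h3 : (r+1) * (r+1)^(n+1) ≤ (r+1) * (r * (r+1+1)^n + 1) := by
      apply Nat.mul_le_mul_left _ ih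
    have h4 : (r+1) * (r * (r+1+1)^n + 1) ≤ r * (r+1+1)^(n+1) + 1 := by
      have : (r+1+1)^(n+1) = (r+1+1) * (r+1+1)^n := by ring
      rw [this]
      have expand1 : (r+1) * (r * (r+1+1)^n + 1) = r*(r+1+1)^n + r*r*(r+1+1)^n + r + 1 := by ring
      have expand2 : r * ((r+1+1) * (r+1+1)^n) + 1 = r*(r+1+1)^n + r*(r+1+1)^n + r*r*(r+1+1)^n + 1 := by ring
      rw [expand1, expand2]
      have : r ≤ r * (r+1+1)^n := Nat.le_mul_of_pos_right _ (by omega)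
      omega
    omega

-- §5 line assignment
def lmap {m k : ℕ} (L : Fin m → Submodule F (Fin k → F)) (m0 : Fin m) : Pt F k → Fin m :=
  fun x => if h : ∃ i, x.submodule ≤ L i then h.choose else m0

lemma lmap_spec {m k : ℕ} (P Q : Fin m → (Fin k → F)) (hk4 : 4 ≤ k)
    (hgen : ∀ T : Finset (Fin m ⊕ Fin m), T.card ≤ k →
      LinearIndependent F (fun t : {x // x ∈ T} => Sum.elim P Q (t : Fin m ⊕ Fin m)))
    (L : Fin m → Submodule F (Fin k → F)) (hL : ∀ i, L i = Submodule.span F {P i, Q i})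
    (m0 : Fin m) (x : Pt F k) (i : Fin m) (hi : x.submodule ≤ L i) :
    lmap L m0 x = i := by
  have h : ∃ j, x.submodule ≤ L j := ⟨i, hi⟩
  rw [lmap, dif_pos h]
  exact line_unique P Q hk4 hgen L hL x h.choose_spec hi

-- §6 recovery map
def recov {m k : ℕ} (P Q : Fin m → (Fin k → F)) (S : Finset (Fin m))
    (w : ({x // x ∈ S} ⊕ {x // x ∈ S}) → F) : Set (Pt F k) :=
  {x | ∃ i : {x // x ∈ S}, x.submodule
    = Submodule.span F {w (Sum.inl i) • P i.1 + w (Sum.inr i) • Q i.1}}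

lemma recov_smul {m k : ℕ} (P Q : Fin m → (Fin k → F)) (S : Finset (Fin m))
    (w : ({x // x ∈ S} ⊕ {x // x ∈ S}) → F) (μ : F) (hμ : μ ≠ 0) :
    recov P Q S (μ • w) = recov P Q S w := by
  unfold recov
  ext x
  simp only [Set.mem_setOf_eq, Pi.smul_apply, smul_eq_mul]
  constructor <;> rintro ⟨i, hi⟩ <;> refine ⟨i, ?_⟩ <;> rw [hi]
  · rw [show (μ * w (Sum.inl i)) • P i.1 + (μ * w (Sum.inr i)) • Q i.1
      = μ • (w (Sum.inl i) • P i.1 + w (Sum.inr i) • Q i.1) by module]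
    exact Submodule.span_singleton_smul_eq (IsUnit.mk0 μ hμ) _
  · rw [show (μ * w (Sum.inl i)) • P i.1 + (μ * w (Sum.inr i)) • Q i.1
      = μ • (w (Sum.inl i) • P i.1 + w (Sum.inr i) • Q i.1) by module]
    exact (Submodule.span_singleton_smul_eq (IsUnit.mk0 μ hμ) _).symm

-- §7 the dependence vector of a crossing circuit
lemma circuit_w {m k : ℕ} (P Q : Fin m → (Fin k → F)) (hk4 : 4 ≤ k)
    (hgen : ∀ T : Finset (Fin m ⊕ Fin m), T.card ≤ k →
      LinearIndependent F (fun t : {x // x ∈ T} => Sum.elim P Q (t : Fin m ⊕ Fin m)))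
    (L : Fin m → Submodule F (Fin k → F)) (hL : ∀ i, L i = Submodule.span F {P i, Q i})
    (m0 : Fin m) (u : ℕ) (hu : k + 1 ≤ 2 * u)
    (S : Finset (Fin m))
    (D : Finset (Pt F k)) (hcr : CrossingCircuit L D) (hDu : D.card = u)
    (hline : D.image (lmap L m0) = S) :
    ∃ w : ({x // x ∈ S} ⊕ {x // x ∈ S}) → F,
      w ∈ LinearMap.ker (lc (Sum.elim (fun a : {x // x ∈ S} => P a.1) (fun a : {x // x ∈ S} => Q a.1)))
      ∧ w ≠ 0 ∧ recov P Q S w = ↑D := by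
  classical
  have hxl : ∀ x ∈ D, x.submodule ≤ L (lmap L m0 x) := by
    intro x hx
    obtain ⟨i, hi⟩ := hcr.2.1 x hx
    rw [lmap_spec P Q hk4 hgen L hL m0 x i hi]
    exact hi
  have hinj : ∀ x ∈ D, ∀ y ∈ D, lmap L m0 x = lmap L m0 y → x = y := by
    intro x hx y hy hxy
    have h1 : x ∈ D.filter (fun z => z.submodule ≤ L (lmap L m0 x)) :=
      Finset.mem_filter.mpr ⟨hx, hxl x hx⟩
    have h2 : y ∈ D.filter (fun z => z.submodule ≤ L (lmap L m0 x)) :=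
      Finset.mem_filter.mpr ⟨hy, hxy ▸ hxl y hy⟩
    exact Finset.card_le_one.mp (hcr.2.2 (lmap L m0 x)) x h1 y h2
  -- the equivalence between D and S
  let e : {x // x ∈ D} → {i // i ∈ S} := fun x =>
    ⟨lmap L m0 x.1, by rw [← hline]; exact Finset.mem_image_of_mem _ x.2⟩
  have hebij : Function.Bijective e := by
    constructor
    · intro x y hxy
      exact Subtype.ext (hinj x.1 x.2 y.1 y.2 (congrArg Subtype.val hxy))
    · rintro ⟨i, hi⟩
      rw [← hline] at hi
      obtain ⟨x, hx, hxi⟩ := Finset.mem_image.mp hi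
      exact ⟨⟨x, hx⟩, Subtype.ext hxi⟩
  let eq : {x // x ∈ D} ≃ {i // i ∈ S} := Equiv.ofBijective e hebij
  -- coefficients
  have hx_pair : ∀ x : {x // x ∈ D}, ∃ ab : F × F,
      ab.1 • P (e x).1 + ab.2 • Q (e x).1 = x.1.rep := by
    intro x
    have hrep : x.1.rep ∈ x.1.submodule := by
      rw [Projectivization.submodule_eq]; exact Submodule.mem_span_singleton_self _
    have := hxl x.1 x.2 hrep
    rw [hL] at this
    obtain ⟨a, b, hab⟩ := Submodule.mem_span_pair.mp this
    exact ⟨⟨a, b⟩, hab⟩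
  choose ab hab using hx_pair
  -- dependence
  have hrange : Set.range (fun x : {x // x ∈ D} => x.1.rep)
      = Projectivization.rep '' (↑D : Set (Pt F k)) := by
    ext y; simp [eq_comm]
  have hDep := hcr.1.1
  unfold Dep at hDep
  have hdep : ¬ LinearIndependent F (fun x : {x // x ∈ D} => x.1.rep) := by
    intro hli
    have h2 := linearIndependent_iff_card_le_finrank_span.mp hli
    rw [Set.finrank, hrange, ← pspan_eq] at h2
    rw [Fintype.card_coe] at h2
    omega
  rw [Fintype.not_linearIndependent_iff] at hdep
  obtain ⟨g, hg0, x₁, hx₁⟩ := hdep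
  -- auxiliary total function
  set G : Pt F k → F := fun y => if h : y ∈ D then g ⟨y, h⟩ else 0 with hG
  have hGg : ∀ x : {x // x ∈ D}, G x.1 = g x := by
    intro x; rw [hG]; simp only; rw [dif_pos x.2]
  -- all coefficients nonzero
  have hgall : ∀ x : {x // x ∈ D}, g x ≠ 0 := by
    intro x₀ hx₀
    refine hcr.1.2 (D.erase x₀.1) (Finset.erase_ssubset x₀.2) ?_
    unfold Dep
    have hx₁x₀ : x₁.1 ≠ x₀.1 := by
      intro hcon
      exact hx₁ (by rw [Subtype.ext hcon]; exact hx₀)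
    have hndep : ¬ LinearIndependent F (fun x : {x // x ∈ D.erase x₀.1} => x.1.rep) := by
      rw [Fintype.not_linearIndependent_iff]
      refine ⟨fun x => G x.1, ?_, ⟨x₁.1, Finset.mem_erase.mpr ⟨hx₁x₀, x₁.2⟩⟩, ?_⟩
      · have hsD : ∑ x : {x // x ∈ D}, g x • x.1.rep
            = ∑ y ∈ D, G y • y.rep := by
          rw [← Finset.sum_coe_sort D (fun y => G y • y.rep)]
          exact Finset.sum_congr rfl (fun x _ => by rw [hGg])
        have hzero : G x₀.1 • x₀.1.rep = 0 := by rw [hGg, hx₀, zero_smul]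
        have hErase : ∑ y ∈ D.erase x₀.1, G y • y.rep = ∑ y ∈ D, G y • y.rep :=
          Finset.sum_erase _ hzero
        rw [Finset.sum_coe_sort (D.erase x₀.1) (fun y => G y • y.rep), hErase, ← hsD, hg0]
      · show G x₁.1 ≠ 0
        rw [hGg x₁]; exact hx₁
    have hfr : Module.finrank F (pspan (↑(D.erase x₀.1) : Set (Pt F k)))
        < (D.erase x₀.1).card := by
      by_contra hcon
      push_neg at hcon
      apply hndep
      rw [linearIndependent_iff_card_le_finrank_span, Set.finrank]
      have : Set.range (fun x : {x // x ∈ D.erase x₀.1} => x.1.rep)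
          = Projectivization.rep '' (↑(D.erase x₀.1) : Set (Pt F k)) := by
        ext y; simp [eq_comm]; tauto
      rw [this, ← pspan_eq, Fintype.card_coe]
      exact hcon
    omega
  -- define w
  refine ⟨Sum.elim (fun i => g (eq.symm i) * (ab (eq.symm i)).1)
    (fun i => g (eq.symm i) * (ab (eq.symm i)).2), ?_, ?_, ?_⟩
  · -- in kernel
    rw [LinearMap.mem_ker]
    show ∑ z : ({x // x ∈ S} ⊕ {x // x ∈ S}), _ • _ = 0
    rw [Fintype.sum_sum_type]
    simp only [Sum.elim_inl, Sum.elim_inr]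
    have key : ∀ i : {x // x ∈ S},
        (g (eq.symm i) * (ab (eq.symm i)).1) • P i.1
          + (g (eq.symm i) * (ab (eq.symm i)).2) • Q i.1
        = g (eq.symm i) • (eq.symm i).1.rep := by
      intro i
      have hei : (e (eq.symm i)).1 = i.1 := congrArg Subtype.val (eq.apply_symm_apply i)
      rw [← hab (eq.symm i), hei]
      module
    rw [← Finset.sum_add_distrib]
    calc ∑ i : {x // x ∈ S}, ((g (eq.symm i) * (ab (eq.symm i)).1) • P i.1
          + (g (eq.symm i) * (ab (eq.symm i)).2) • Q i.1)
        = ∑ i : {x // x ∈ S}, g (eq.symm i) • (eq.symm i).1.rep :=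
          Finset.sum_congr rfl (fun i _ => key i)
      _ = ∑ x : {x // x ∈ D}, g x • x.1.rep := Equiv.sum_comp eq.symm (fun x => g x • x.1.rep)
      _ = 0 := hg0
  · -- nonzero
    intro hw0
    have hDne : D.Nonempty := Finset.card_pos.mp (by omega)
    obtain ⟨x, hx⟩ := hDne
    set i := eq ⟨x, hx⟩ with hi
    have h1 : g (eq.symm i) * (ab (eq.symm i)).1 = 0 := congrFun hw0 (Sum.inl i)
    have h2 : g (eq.symm i) * (ab (eq.symm i)).2 = 0 := congrFun hw0 (Sum.inr i)
    have hg := hgall (eq.symm i)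
    have ha : (ab (eq.symm i)).1 = 0 := by
      rcases mul_eq_zero.mp h1 with h | h
      · exact absurd h hg
      · exact h
    have hb : (ab (eq.symm i)).2 = 0 := by
      rcases mul_eq_zero.mp h2 with h | h
      · exact absurd h hg
      · exact h
    have := hab (eq.symm i)
    rw [ha, hb, zero_smul, zero_smul, add_zero] at this
    exact Projectivization.rep_nonzero (eq.symm i).1 this.symm
  · -- recovery
    have key : ∀ i : {x // x ∈ S},
        (g (eq.symm i) * (ab (eq.symm i)).1) • P i.1
          + (g (eq.symm i) * (ab (eq.symm i)).2) • Q i.1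
        = g (eq.symm i) • (eq.symm i).1.rep := by
      intro i
      have hei : (e (eq.symm i)).1 = i.1 := congrArg Subtype.val (eq.apply_symm_apply i)
      rw [← hab (eq.symm i), hei]
      module
    have hspan : ∀ i : {x // x ∈ S},
        Submodule.span F {g (eq.symm i) • (eq.symm i).1.rep} = (eq.symm i).1.submodule := by
      intro i
      rw [Projectivization.submodule_eq]
      exact Submodule.span_singleton_smul_eq (IsUnit.mk0 _ (hgall (eq.symm i))) _
    ext z
    unfold recov
    simp only [Set.mem_setOf_eq, Sum.elim_inl, Sum.elim_inr, Finset.coe_sort_coe,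
      Finset.mem_coe]
    constructor
    · rintro ⟨i, hzi⟩
      rw [key i, hspan i] at hzi
      rw [Projectivization.submodule_injective hzi]
      exact (eq.symm i).2
    · intro hz
      refine ⟨eq ⟨z, hz⟩, ?_⟩
      rw [key _, hspan _, Equiv.symm_apply_apply]

-- §8 counting circuits with a given line set
set_option maxHeartbeats 1000000 in
set_option synthInstance.maxHeartbeats 200000 in
lemma fiber_count [Fintype F] {m k : ℕ} (P Q : Fin m → (Fin k → F)) (hk4 : 4 ≤ k)
    (hgen : ∀ T : Finset (Fin m ⊕ Fin m), T.card ≤ k →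
      LinearIndependent F (fun t : {x // x ∈ T} => Sum.elim P Q (t : Fin m ⊕ Fin m)))
    (L : Fin m → Submodule F (Fin k → F)) (hL : ∀ i, L i = Submodule.span F {P i, Q i})
    (m0 : Fin m) (u : ℕ) (hu : k + 1 ≤ 2 * u)
    (S : Finset (Fin m)) (hSu : S.card = u)
    (fib : Finset (Finset (Pt F k)))
    (hfib : ∀ D ∈ fib, CrossingCircuit L D ∧ D.card = u ∧ D.image (lmap L m0) = S) :
    fib.card * (Fintype.card F - 1) ≤ Fintype.card F ^ (2 * u - k) - 1 := by
  classical
  set v : ({x // x ∈ S} ⊕ {x // x ∈ S}) → (Fin k → F) :=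
    Sum.elim (fun a : {x // x ∈ S} => P a.1) (fun a : {x // x ∈ S} => Q a.1) with hv
  have hspan : Submodule.span F (Set.range v) = ⊤ := by
    have h := span_top P Q hgen S (by omega)
    rw [← h]
    congr 1
    ext y
    simp only [hv, Set.mem_range, Set.mem_image, Finset.coe_union, Finset.coe_image,
      Set.mem_union]
    constructor
    · rintro ⟨(a | a), rfl⟩
      · exact ⟨Sum.inl a.1, by simp [a.2], rfl⟩
      · exact ⟨Sum.inr a.1, by simp [a.2], rfl⟩
    · rintro ⟨z, hz, rfl⟩
      simp only [Finset.coe_union, Set.mem_union, Finset.coe_image, Set.mem_image,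
        Finset.mem_coe] at hz
      rcases hz with ⟨b, hb, rfl⟩ | ⟨b, hb, rfl⟩
      · exact ⟨Sum.inl ⟨b, hb⟩, rfl⟩
      · exact ⟨Sum.inr ⟨b, hb⟩, rfl⟩
  set K := LinearMap.ker (lc v) with hK
  -- choose dependence vectors
  have hw : ∀ D : {D // D ∈ fib}, ∃ w : ({x // x ∈ S} ⊕ {x // x ∈ S}) → F,
      w ∈ K ∧ w ≠ 0 ∧ recov P Q S w = ↑D.1 := by
    rintro ⟨D, hD⟩
    obtain ⟨h1, h2, h3⟩ := hfib D hD
    exact circuit_w P Q hk4 hgen L hL m0 u hu S D h1 h2 h3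
  choose w hwK hw0 hwrec using hw
  -- injection into nonzero kernel vectors
  let Φ : {D // D ∈ fib} × Fˣ → {z : ↥K // z ≠ 0} := fun Dl =>
    ⟨⟨(Dl.2 : F) • w Dl.1, Submodule.smul_mem K _ (hwK Dl.1)⟩, by
      intro hcon
      rw [Submodule.mk_eq_zero] at hcon
      exact hw0 Dl.1 (by
        have := congrArg (fun z => (Dl.2⁻¹ : F) • z) hcon
        simpa [smul_smul] using this)⟩
  have hΦinj : Function.Injective Φ := by
    rintro ⟨D, lam⟩ ⟨D', lam'⟩ hDD
    simp only [Φ, Subtype.mk.injEq] at hDD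
    have hDeq : D = D' := by
      have hrec : recov P Q S (w D) = recov P Q S (w D') := by
        have h1 : w D' = ((lam'⁻¹ : Fˣ) : F) • ((lam : F) • w D) := by
          rw [hDD]; simp [smul_smul]
        rw [h1, ← smul_assoc]
        rw [recov_smul P Q S _ _ (by
          simp only [smul_eq_mul]
          exact mul_ne_zero (Units.ne_zero _) (Units.ne_zero _))]
      apply Subtype.ext
      have := (hwrec D).symm.trans (hrec.trans (hwrec D'))
      exact Finset.coe_injective this
    subst hDeq
    have hlam : lam = lam' := by
      obtain ⟨z, hz⟩ := Function.ne_iff.mp (hw0 D)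
      have := congrFun hDD z
      simp only [Pi.smul_apply, smul_eq_mul] at this
      exact Units.ext (mul_right_cancel₀ hz this)
    rw [hlam]
  haveI : Finite ↥K := Subtype.finite
  haveI : Finite {z : ↥K // z ≠ 0} := Subtype.finite
  have hcard := Nat.card_le_card_of_injective Φ hΦinj
  rw [Nat.card_prod] at hcard
  have h1 : Nat.card {D // D ∈ fib} = fib.card := by
    rw [Nat.card_eq_fintype_card, Fintype.card_coe]
  have h2 : Nat.card Fˣ = Fintype.card F - 1 := by
    rw [Nat.card_eq_fintype_card, Fintype.card_units]
  have h3 : Nat.card {z : ↥K // z ≠ 0} = Fintype.card F ^ (2 * u - k) - 1 := by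
    haveI : Fintype ↥K := Fintype.ofFinite _
    rw [Nat.card_eq_fintype_card]
    have hc : Fintype.card {z : ↥K // z ≠ 0} = Fintype.card ↥K - Fintype.card {z : ↥K // z = 0} := by
      have := Fintype.card_subtype_compl (fun z : ↥K => z = 0)
      simpa using this
    rw [hc, Fintype.card_subtype_eq (0 : ↥K)]
    have hkc : Fintype.card ↥K = Fintype.card F ^ (2 * u - k) := by
      have := ker_card v hspan
      rw [← hK, Nat.card_eq_fintype_card] at this
      rw [this]
      congr 1
      simp [Fintype.card_sum, Fintype.card_coe, hSu]
      ring
    rw [hkc]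
  rw [h1, h2, h3] at hcard
  exact hcard

-- §9 global circuit count
lemma circ_count [Fintype F] {m k : ℕ} (P Q : Fin m → (Fin k → F)) (hk4 : 4 ≤ k)
    (hgen : ∀ T : Finset (Fin m ⊕ Fin m), T.card ≤ k →
      LinearIndependent F (fun t : {x // x ∈ T} => Sum.elim P Q (t : Fin m ⊕ Fin m)))
    (L : Fin m → Submodule F (Fin k → F)) (hL : ∀ i, L i = Submodule.span F {P i, Q i})
    (m0 : Fin m) (u : ℕ) (hu : k + 1 ≤ 2 * u) (ΩF : Finset (Pt F k)) :
    ((ΩF.powersetCard u).filter (fun D => CrossingCircuit L D)).card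
      ≤ m.choose u * (Fintype.card F + 1) ^ (2 * u - k - 1) := by
  classical
  set q := Fintype.card F with hqdef
  have hq : 2 ≤ q := Fintype.one_lt_card
  set Circ := (ΩF.powersetCard u).filter (fun D => CrossingCircuit L D) with hCirc
  have himg : ∀ D ∈ Circ, D.image (lmap L m0) ∈ (Finset.univ : Finset (Fin m)).powersetCard u := by
    intro D hD
    rw [hCirc, Finset.mem_filter, Finset.mem_powersetCard] at hD
    obtain ⟨⟨_, hDu⟩, hcr⟩ := hD
    rw [Finset.mem_powersetCard]
    refine ⟨Finset.subset_univ _, ?_⟩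
    rw [Finset.card_image_of_injOn, hDu]
    intro x hx y hy hxy
    have hxl : ∀ z ∈ D, z.submodule ≤ L (lmap L m0 z) := by
      intro z hz
      obtain ⟨i, hi⟩ := hcr.2.1 z hz
      rw [lmap_spec P Q hk4 hgen L hL m0 z i hi]
      exact hi
    have h1 : x ∈ D.filter (fun z => z.submodule ≤ L (lmap L m0 x)) :=
      Finset.mem_filter.mpr ⟨hx, hxl x hx⟩
    have h2 : y ∈ D.filter (fun z => z.submodule ≤ L (lmap L m0 x)) :=
      Finset.mem_filter.mpr ⟨hy, hxy ▸ hxl y hy⟩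
    exact Finset.card_le_one.mp (hcr.2.2 (lmap L m0 x)) x h1 y h2
  rw [Finset.card_eq_sum_card_fiberwise himg]
  have hfibb : ∀ S ∈ (Finset.univ : Finset (Fin m)).powersetCard u,
      (Circ.filter (fun D => D.image (lmap L m0) = S)).card ≤ (q + 1) ^ (2 * u - k - 1) := by
    intro S hS
    rw [Finset.mem_powersetCard] at hS
    have hfc := fiber_count P Q hk4 hgen L hL m0 u hu S hS.2
      (Circ.filter (fun D => D.image (lmap L m0) = S)) (by
        intro D hD
        rw [Finset.mem_filter, hCirc, Finset.mem_filter, Finset.mem_powersetCard] at hD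
        exact ⟨hD.1.2, hD.1.1.2, hD.2⟩)
    have hpi := pow_ineq q (by omega) (2 * u - k)
    have h2 : q ^ (2 * u - k) - 1 ≤ (q - 1) * (q + 1) ^ (2 * u - k - 1) := by omega
    have h3 := le_trans hfc h2
    have h4 : 0 < q - 1 := by omega
    rw [mul_comm (q - 1) _] at h3
    exact Nat.le_of_mul_le_mul_right h3 h4
  calc ∑ S ∈ (Finset.univ : Finset (Fin m)).powersetCard u,
        (Circ.filter (fun D => D.image (lmap L m0) = S)).card
      ≤ ∑ S ∈ (Finset.univ : Finset (Fin m)).powersetCard u, (q + 1) ^ (2 * u - k - 1) :=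
        Finset.sum_le_sum hfibb
    _ = m.choose u * (q + 1) ^ (2 * u - k - 1) := by
        rw [Finset.sum_const, Finset.card_powersetCard, Finset.card_univ, Fintype.card_fin,
          smul_eq_mul]

-- §10 pairs count and expectation of Xu
lemma Xu_eq_card {m k : ℕ} (L : Fin m → Submodule F (Fin k → F))
    (ΩF : Finset (Pt F k)) (hΩF : ∀ x, x ∈ ΩF ↔ ∃ i, x.submodule ≤ L i)
    (u : ℕ) (Γ : Finset (Pt F k)) :
    Xu L u Γ = ((((ΩF.powersetCard u) ×ˢ ΩF.powersetCard (2 * u - k)).filter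
      (fun DJ => CrossingCircuit L DJ.1 ∧ DJ.2 ⊆ DJ.1)).filter
        (fun DJ => DJ.2 ⊆ Γ)).card := by
  classical
  unfold Xu
  rw [show {DJ : Finset (Pt F k) × Finset (Pt F k) |
      CrossingCircuit L DJ.1 ∧ DJ.1.card = u ∧
      DJ.2 ⊆ DJ.1 ∩ Γ ∧ DJ.2.card = 2 * u - k}
    = ↑((((ΩF.powersetCard u) ×ˢ ΩF.powersetCard (2 * u - k)).filter
      (fun DJ => CrossingCircuit L DJ.1 ∧ DJ.2 ⊆ DJ.1)).filter
        (fun DJ => DJ.2 ⊆ Γ)) from ?_]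
  · rw [Set.ncard_coe_finset]
  ext DJ
  simp only [Set.mem_setOf_eq, Finset.coe_filter, Finset.mem_filter, Finset.mem_product,
    Finset.mem_powersetCard]
  constructor
  · rintro ⟨hcr, hDu, hJD, hJcard⟩
    have hDΩ : DJ.1 ⊆ ΩF := by
      intro x hx
      rw [hΩF x]
      exact hcr.2.1 x hx
    have hJsub := Finset.subset_inter_iff.mp hJD
    exact ⟨⟨⟨⟨hDΩ, hDu⟩, ⟨hJsub.1.trans hDΩ, hJcard⟩⟩, hcr, hJsub.1⟩, hJsub.2⟩
  · rintro ⟨⟨⟨⟨hDΩ, hDu⟩, ⟨hJΩ, hJcard⟩⟩, hcr, hJD⟩, hJΓ⟩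
    exact ⟨hcr, hDu, Finset.subset_inter_iff.mpr ⟨hJD, hJΓ⟩, hJcard⟩

lemma Xu_expec {m k : ℕ} (L : Fin m → Submodule F (Fin k → F))
    (ΩF : Finset (Pt F k)) (hΩF : ∀ x, x ∈ ΩF ↔ ∃ i, x.submodule ≤ L i)
    (u : ℕ) (p : ℝ) :
    expec p ΩF (fun Γ => (Xu L u Γ : ℝ))
      = ((((ΩF.powersetCard u) ×ˢ ΩF.powersetCard (2 * u - k)).filter
          (fun DJ => CrossingCircuit L DJ.1 ∧ DJ.2 ⊆ DJ.1)).card : ℝ) * p ^ (2 * u - k) := by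
  classical
  set Pairs := ((ΩF.powersetCard u) ×ˢ ΩF.powersetCard (2 * u - k)).filter
    (fun DJ => CrossingCircuit L DJ.1 ∧ DJ.2 ⊆ DJ.1) with hPairs
  have hpt : ∀ Γ : Finset (Pt F k), (Xu L u Γ : ℝ)
      = ∑ DJ ∈ Pairs, (if DJ.2 ⊆ Γ then (1:ℝ) else 0) := by
    intro Γ
    rw [Xu_eq_card L ΩF hΩF u Γ, Finset.card_filter]
    push_cast
    rfl
  have h1 : expec p ΩF (fun Γ => (Xu L u Γ : ℝ))
      = expec p ΩF (fun Γ => ∑ DJ ∈ Pairs, (if DJ.2 ⊆ Γ then (1:ℝ) else 0)) := by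
    unfold expec
    exact Finset.sum_congr rfl (fun Γ _ => by simp only []; rw [hpt Γ])
  rw [h1, expec_sum]
  have h2 : ∀ DJ ∈ Pairs, expec p ΩF (fun Γ => if DJ.2 ⊆ Γ then (1:ℝ) else 0)
      = p ^ (2 * u - k) := by
    intro DJ hDJ
    rw [hPairs, Finset.mem_filter, Finset.mem_product] at hDJ
    obtain ⟨⟨hD, hJ⟩, -⟩ := hDJ
    rw [Finset.mem_powersetCard] at hJ
    rw [expec_indicator p ΩF DJ.2 hJ.1, hJ.2]
  rw [Finset.sum_congr rfl h2, Finset.sum_const, nsmul_eq_mul]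

lemma pairs_card_le {m k : ℕ} (L : Fin m → Submodule F (Fin k → F))
    (ΩF : Finset (Pt F k)) (u : ℕ) :
    (((ΩF.powersetCard u) ×ˢ ΩF.powersetCard (2 * u - k)).filter
      (fun DJ => CrossingCircuit L DJ.1 ∧ DJ.2 ⊆ DJ.1)).card
    ≤ ((ΩF.powersetCard u).filter (fun D => CrossingCircuit L D)).card
        * u.choose (2 * u - k) := by
  classical
  set Pairs := ((ΩF.powersetCard u) ×ˢ ΩF.powersetCard (2 * u - k)).filter
    (fun DJ => CrossingCircuit L DJ.1 ∧ DJ.2 ⊆ DJ.1) with hPairs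
  set Circ := (ΩF.powersetCard u).filter (fun D => CrossingCircuit L D) with hCirc
  have hmem : ∀ DJ ∈ Pairs, DJ.1 ∈ Circ := by
    intro DJ hDJ
    rw [hPairs, Finset.mem_filter, Finset.mem_product] at hDJ
    rw [hCirc, Finset.mem_filter]
    exact ⟨hDJ.1.1, hDJ.2.1⟩
  rw [Finset.card_eq_sum_card_fiberwise hmem]
  have hfib : ∀ D ∈ Circ, (Pairs.filter (fun DJ => DJ.1 = D)).card ≤ u.choose (2 * u - k) := by
    intro D hD
    rw [hCirc, Finset.mem_filter, Finset.mem_powersetCard] at hD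
    have : (Pairs.filter (fun DJ => DJ.1 = D)).card ≤ (Finset.powersetCard (2 * u - k) D).card := by
      apply Finset.card_le_card_of_injOn (fun DJ => DJ.2)
      · intro DJ hDJ
        rw [Finset.mem_coe, Finset.mem_filter, hPairs, Finset.mem_filter, Finset.mem_product] at hDJ
        obtain ⟨⟨⟨hD, hJ⟩, hcr, hJD⟩, hfst⟩ := hDJ
        rw [Finset.mem_powersetCard] at hJ
        rw [Finset.mem_coe, Finset.mem_powersetCard]
        exact ⟨hfst ▸ hJD, hJ.2⟩
      · intro DJ hDJ DJ' hDJ' hsnd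
        rw [Finset.mem_coe, Finset.mem_filter] at hDJ hDJ'
        exact Prod.ext (hDJ.2.trans hDJ'.2.symm) hsnd
    rwa [Finset.card_powersetCard, hD.1.2] at this
  calc ∑ D ∈ Circ, (Pairs.filter (fun DJ => DJ.1 = D)).card
      ≤ ∑ D ∈ Circ, u.choose (2 * u - k) := Finset.sum_le_sum hfib
    _ = Circ.card * u.choose (2 * u - k) := by rw [Finset.sum_const, smul_eq_mul]

/-- with `c = (ε/(3·binom(m,s)))^{1/s}`, `α = 1 - 1/s` and `p = c·Q^{-α}`,
one has `E[X] ≤ ε/3 + 3^m·Q^{-2/s}`. -/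
theorem statement14 [Fintype F] {m k s : ℕ} (hm : 2 ≤ m) (hk4 : 4 ≤ k)
    (hkm : k + 1 ≤ 2 * m) (hmk : m ≤ k) (hs : k + s = 2 * m)
    (P Q : Fin m → (Fin k → F))
    (hgen : ∀ T : Finset (Fin m ⊕ Fin m), T.card ≤ k →
      LinearIndependent F (fun t : {x // x ∈ T} => Sum.elim P Q (t : Fin m ⊕ Fin m)))
    (L : Fin m → Submodule F (Fin k → F))
    (hL : ∀ i, L i = Submodule.span F {P i, Q i})
    (ΩF : Finset (Pt F k)) (hΩF : ∀ x, x ∈ ΩF ↔ ∃ i, x.submodule ≤ L i)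
    (Qr : ℝ) (hQr : Qr = (Fintype.card F : ℝ) + 1)
    (ε : ℝ) (hε0 : 0 < ε) (hε1 : ε < 1)
    (c : ℝ) (hc : c = (ε / (3 * (m.choose s : ℝ))) ^ ((1 : ℝ) / (s : ℝ)))
    (α : ℝ) (hα : α = 1 - 1 / (s : ℝ))
    (p : ℝ) (hp : p = c * Qr ^ (-α)) (hp0 : 0 < p) (hp1 : p < 1) :
    expec p ΩF (fun Γ => (Xtot L Γ : ℝ))
      ≤ ε / 3 + 3 ^ m * Qr ^ (-(2 : ℝ) / (s : ℝ)) := by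
  classical
  set q := Fintype.card F with hqdef
  have hq2 : 2 ≤ q := Fintype.one_lt_card
  have hQr0 : (0:ℝ) < Qr := by rw [hQr]; positivity
  have hQr1 : (1:ℝ) < Qr := by
    rw [hQr]
    have : (1:ℝ) ≤ (q:ℝ) := by exact_mod_cast (by omega : 1 ≤ q)
    linarith
  have hs1 : 1 ≤ s := by omega
  have hsm : s ≤ m := by omega
  have hsne : (s:ℝ) ≠ 0 := by
    exact_mod_cast (by omega : s ≠ 0)
  have hspos : (0:ℝ) < (s:ℝ) := by exact_mod_cast (by omega : 0 < s)
  have hCpos : (0:ℝ) < (m.choose s : ℝ) := by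
    exact_mod_cast Nat.choose_pos hsm
  set x : ℝ := ε / (3 * (m.choose s : ℝ)) with hxdef
  have hx0 : 0 < x := by rw [hxdef]; positivity
  have hx1 : x ≤ 1 := by
    rw [hxdef, div_le_one (by positivity)]
    have h1 : (1:ℝ) ≤ (m.choose s : ℝ) := by exact_mod_cast Nat.choose_pos hsm
    nlinarith
  have hc0 : 0 < c := by rw [hc]; exact Real.rpow_pos_of_pos hx0 _
  have hc1 : c ≤ 1 := by
    rw [hc]
    exact Real.rpow_le_one hx0.le hx1 (by positivity)
  have m0 : Fin m := ⟨0, by omega⟩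
  -- the c^s and Q exponent computations
  have hcs : c ^ s = x := by
    rw [hc, ← Real.rpow_natCast (x ^ ((1:ℝ)/(s:ℝ))) s, ← Real.rpow_mul hx0.le]
    rw [one_div, inv_mul_cancel₀ hsne, Real.rpow_one]
  -- expectation splits
  have hXtot : expec p ΩF (fun Γ => (Xtot L Γ : ℝ))
      = ∑ u ∈ Finset.Icc ((k + 2) / 2) m, expec p ΩF (fun Γ => (Xu L u Γ : ℝ)) := by
    rw [← expec_sum]
    unfold expec
    apply Finset.sum_congr rfl
    intro Γ _
    congr 1
    unfold Xtot
    push_cast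
    rfl
  rw [hXtot]
  -- per-u bound
  have hbound : ∀ u ∈ Finset.Icc ((k + 2) / 2) m,
      expec p ΩF (fun Γ => (Xu L u Γ : ℝ))
      ≤ (m.choose u : ℝ) * (u.choose (2*u-k) : ℝ) * Qr ^ ((2*u - k - 1 : ℕ)) * p ^ (2*u-k) := by
    intro u hu
    rw [Finset.mem_Icc] at hu
    have hu2 : k + 1 ≤ 2 * u := by omega
    rw [Xu_expec L ΩF hΩF u p]
    have hcnt := le_trans (pairs_card_le L ΩF u)
      (Nat.mul_le_mul_right (u.choose (2*u-k)) (circ_count P Q hk4 hgen L hL m0 u hu2 ΩF))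
    have hcast : ((((ΩF.powersetCard u) ×ˢ ΩF.powersetCard (2 * u - k)).filter
        (fun DJ => CrossingCircuit L DJ.1 ∧ DJ.2 ⊆ DJ.1)).card : ℝ)
        ≤ (m.choose u : ℝ) * (u.choose (2*u-k) : ℝ) * Qr ^ ((2*u - k - 1 : ℕ)) := by
      have := hcnt
      have hq1 : ((q:ℝ) + 1) = Qr := by rw [hQr]
      calc ((((ΩF.powersetCard u) ×ˢ ΩF.powersetCard (2 * u - k)).filter
          (fun DJ => CrossingCircuit L DJ.1 ∧ DJ.2 ⊆ DJ.1)).card : ℝ)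
          ≤ ((m.choose u * (q + 1) ^ (2 * u - k - 1) * u.choose (2*u-k) : ℕ) : ℝ) := by
            exact_mod_cast this
        _ = (m.choose u : ℝ) * (u.choose (2*u-k) : ℝ) * ((q:ℝ)+1) ^ ((2*u - k - 1 : ℕ)) := by
            push_cast; ring
        _ = (m.choose u : ℝ) * (u.choose (2*u-k) : ℝ) * Qr ^ ((2*u - k - 1 : ℕ)) := by
            rw [hq1]
    exact mul_le_mul_of_nonneg_right hcast (by positivity)
  have hfinal : ∑ u ∈ Finset.Icc ((k + 2) / 2) m,
      (m.choose u : ℝ) * (u.choose (2*u-k) : ℝ) * Qr ^ ((2*u - k - 1 : ℕ)) * p ^ (2*u-k)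
      ≤ ε / 3 + 3 ^ m * Qr ^ (-(2 : ℝ) / (s : ℝ)) := by
    have hmIcc : m ∈ Finset.Icc ((k + 2) / 2) m := by
      rw [Finset.mem_Icc]; omega
    rw [← Finset.add_sum_erase _ _ hmIcc]
    have hterm_m : (m.choose m : ℝ) * (m.choose (2*m-k) : ℝ) * Qr ^ ((2*m - k - 1 : ℕ)) * p ^ (2*m-k)
        = ε / 3 := by
      have hts : 2*m - k = s := by omega
      rw [hts, Nat.choose_self, Nat.cast_one]
      have hp_pow : p ^ s = c ^ s * Qr ^ (-(α * (s:ℝ))) := by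
        rw [hp, mul_pow, ← Real.rpow_natCast (Qr ^ (-α)) s, ← Real.rpow_mul hQr0.le]
        rw [neg_mul]
      have hQrpow : Qr ^ ((s - 1 : ℕ)) = Qr ^ (((s:ℝ) - 1)) := by
        rw [← Real.rpow_natCast Qr (s-1)]
        congr 1
        push_cast [Nat.cast_sub hs1]
        ring
      have hαs : -(α * (s:ℝ)) = 1 - (s:ℝ) := by
        rw [hα]
        field_simp
        ring
      rw [hp_pow, hαs, hQrpow, hcs]
      have : Qr ^ (((s:ℝ) - 1)) * Qr ^ ((1:ℝ) - (s:ℝ)) = 1 := by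
        rw [← Real.rpow_add hQr0]
        norm_num
      calc (1:ℝ) * (m.choose s : ℝ) * Qr ^ (((s:ℝ) - 1)) * (x * Qr ^ ((1:ℝ) - (s:ℝ)))
          = (m.choose s : ℝ) * x * (Qr ^ (((s:ℝ) - 1)) * Qr ^ ((1:ℝ) - (s:ℝ))) := by ring
        _ = (m.choose s : ℝ) * x := by rw [this, mul_one]
        _ = ε / 3 := by
            rw [hxdef]
            field_simp
    rw [hterm_m]
    apply add_le_add_right
    -- remaining terms
    have hterm_u : ∀ u ∈ (Finset.Icc ((k + 2) / 2) m).erase m,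
        (m.choose u : ℝ) * (u.choose (2*u-k) : ℝ) * Qr ^ ((2*u - k - 1 : ℕ)) * p ^ (2*u-k)
        ≤ ((m.choose u * 2 ^ u : ℕ) : ℝ) * Qr ^ (-(2 : ℝ) / (s : ℝ)) := by
      intro u hu
      rw [Finset.mem_erase, Finset.mem_Icc] at hu
      have hum : u < m := lt_of_le_of_ne hu.2.2 hu.1
      have ht1 : 1 ≤ 2*u - k := by omega
      have hts2 : 2*u - k ≤ s - 2 := by omega
      have htu : 2*u - k ≤ u := by omega
      set t := 2*u - k with htdef
      -- choose bound
      have hch : (u.choose t : ℝ) ≤ ((2:ℝ)) ^ u := by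
        have h1 : u.choose t ≤ 2 ^ u := by
          calc u.choose t ≤ ∑ j ∈ Finset.range (u+1), u.choose j :=
                Finset.single_le_sum (f := fun j => u.choose j) (fun _ _ => Nat.zero_le _)
                  (Finset.mem_range.mpr (by omega))
            _ = 2 ^ u := Nat.sum_range_choose u
        exact_mod_cast h1
      -- power bound
      have hpow : Qr ^ ((t - 1 : ℕ)) * p ^ t ≤ Qr ^ (-(2 : ℝ) / (s : ℝ)) := by
        have hp_pow : p ^ t = c ^ t * Qr ^ (-(α * (t:ℝ))) := by
          rw [hp, mul_pow, ← Real.rpow_natCast (Qr ^ (-α)) t, ← Real.rpow_mul hQr0.le]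
          rw [neg_mul]
        have hct : c ^ t ≤ 1 := pow_le_one₀ hc0.le hc1
        have hQrpow : Qr ^ ((t - 1 : ℕ)) = Qr ^ (((t:ℝ) - 1)) := by
          rw [← Real.rpow_natCast Qr (t-1)]
          congr 1
          push_cast [Nat.cast_sub ht1]
          ring
        rw [hp_pow, hQrpow]
        have hexp : Qr ^ (((t:ℝ) - 1)) * Qr ^ (-(α * (t:ℝ))) = Qr ^ ((t:ℝ)/(s:ℝ) - 1) := by
          rw [← Real.rpow_add hQr0]
          congr 1
          rw [hα]
          field_simp
          ring
        calc Qr ^ (((t:ℝ) - 1)) * (c ^ t * Qr ^ (-(α * (t:ℝ))))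
            ≤ Qr ^ (((t:ℝ) - 1)) * (1 * Qr ^ (-(α * (t:ℝ)))) := by
              apply mul_le_mul_of_nonneg_left _ (by positivity)
              apply mul_le_mul_of_nonneg_right hct (by positivity)
          _ = Qr ^ ((t:ℝ)/(s:ℝ) - 1) := by rw [one_mul, hexp]
          _ ≤ Qr ^ (-(2 : ℝ) / (s : ℝ)) := by
              apply Real.rpow_le_rpow_of_exponent_le hQr1.le
              have hts2' : (t:ℝ) + 2 ≤ (s:ℝ) := by exact_mod_cast (show t + 2 ≤ s by omega)
              have heq : (t:ℝ)/(s:ℝ) - 1 = ((t:ℝ) - (s:ℝ))/(s:ℝ) := by field_simp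
              have heq2 : -(2 : ℝ) / (s : ℝ) = (-2 : ℝ)/(s:ℝ) := by ring
              rw [heq, heq2]
              exact div_le_div_of_nonneg_right (by linarith) hspos.le
      calc (m.choose u : ℝ) * (u.choose t : ℝ) * Qr ^ ((t - 1 : ℕ)) * p ^ t
          ≤ (m.choose u : ℝ) * (2:ℝ) ^ u * (Qr ^ ((t - 1 : ℕ)) * p ^ t) := by
            have h0 : (0:ℝ) ≤ Qr ^ ((t - 1 : ℕ)) * p ^ t := by positivity
            have := mul_le_mul_of_nonneg_right
              (mul_le_mul_of_nonneg_left hch (by positivity : (0:ℝ) ≤ (m.choose u : ℝ))) h0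
            calc (m.choose u : ℝ) * (u.choose t : ℝ) * Qr ^ ((t - 1 : ℕ)) * p ^ t
                = ((m.choose u : ℝ) * (u.choose t : ℝ)) * (Qr ^ ((t - 1 : ℕ)) * p ^ t) := by ring
              _ ≤ ((m.choose u : ℝ) * (2:ℝ) ^ u) * (Qr ^ ((t - 1 : ℕ)) * p ^ t) := this
        _ ≤ (m.choose u : ℝ) * (2:ℝ) ^ u * Qr ^ (-(2 : ℝ) / (s : ℝ)) := by
            apply mul_le_mul_of_nonneg_left hpow (by positivity)
        _ = ((m.choose u * 2 ^ u : ℕ) : ℝ) * Qr ^ (-(2 : ℝ) / (s : ℝ)) := by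
            push_cast; ring
    calc ∑ u ∈ (Finset.Icc ((k + 2) / 2) m).erase m,
          (m.choose u : ℝ) * (u.choose (2*u-k) : ℝ) * Qr ^ ((2*u - k - 1 : ℕ)) * p ^ (2*u-k)
        ≤ ∑ u ∈ (Finset.Icc ((k + 2) / 2) m).erase m,
          ((m.choose u * 2 ^ u : ℕ) : ℝ) * Qr ^ (-(2 : ℝ) / (s : ℝ)) :=
          Finset.sum_le_sum hterm_u
      _ = ((∑ u ∈ (Finset.Icc ((k + 2) / 2) m).erase m, (m.choose u * 2 ^ u : ℕ) : ℕ) : ℝ)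
            * Qr ^ (-(2 : ℝ) / (s : ℝ)) := by
          rw [← Finset.sum_mul]
          push_cast
          ring
      _ ≤ 3 ^ m * Qr ^ (-(2 : ℝ) / (s : ℝ)) := by
          apply mul_le_mul_of_nonneg_right _ (by positivity)
          have hsub : (Finset.Icc ((k + 2) / 2) m).erase m ⊆ Finset.range (m+1) := by
            intro u hu
            rw [Finset.mem_erase, Finset.mem_Icc] at hu
            rw [Finset.mem_range]
            omega
          have hsum : ∑ u ∈ (Finset.Icc ((k + 2) / 2) m).erase m, (m.choose u * 2 ^ u)
              ≤ ∑ u ∈ Finset.range (m+1), (m.choose u * 2 ^ u) :=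
            Finset.sum_le_sum_of_subset hsub
          have h3m : ∑ u ∈ Finset.range (m+1), (m.choose u * 2 ^ u) = 3 ^ m := by
            have h := add_pow (2:ℕ) 1 m
            norm_num at h
            exact (Finset.sum_congr rfl fun u _ => mul_comm _ _).trans h.symm
          have : ∑ u ∈ (Finset.Icc ((k + 2) / 2) m).erase m, (m.choose u * 2 ^ u) ≤ 3 ^ m := by
            omega
          calc ((∑ u ∈ (Finset.Icc ((k + 2) / 2) m).erase m, (m.choose u * 2 ^ u : ℕ) : ℕ) : ℝ)
              ≤ ((3 ^ m : ℕ) : ℝ) := by exact_mod_cast this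
            _ = 3 ^ m := by push_cast; ring
  calc ∑ u ∈ Finset.Icc ((k + 2) / 2) m, expec p ΩF (fun Γ => (Xu L u Γ : ℝ))
      ≤ ∑ u ∈ Finset.Icc ((k + 2) / 2) m,
          (m.choose u : ℝ) * (u.choose (2*u-k) : ℝ) * Qr ^ ((2*u - k - 1 : ℕ)) * p ^ (2*u-k) :=
        Finset.sum_le_sum hbound
    _ ≤ ε / 3 + 3 ^ m * Qr ^ (-(2 : ℝ) / (s : ℝ)) := hfinal
end
end

section
/- Assume s ≥ 2, let 0 < c < 1 and p = c·Q^{−(s−2)/(s−1)} (assume 0 < p < 1). Then: (a) for each i, E[V_i] ≥ c·Q^{1/(s−1)}; (b) E[X_m] ≤ c^s·binom(m,s)·Q^{1/(s−1)}; and (c) E[X] ≤ c^s·binom(m,s)·Q^{1/(s−1)} + 3^m·Q^{−1/(s−1)}. -/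
open scoped Classical
noncomputable section

variable {F : Type} [Field F]

noncomputable instance projFintype {K V : Type*} [DivisionRing K] [AddCommGroup V]
    [Module K V] [Fintype V] : Fintype (Projectivization K V) :=
  @Quotient.fintype { v : V // v ≠ 0 } _ (projectivizationSetoid K V)
    (fun _ _ => Classical.propDecidable _)

namespace S17Aux

lemma rep_mem {K V : Type*} [DivisionRing K] [AddCommGroup V] [Module K V]
    (x : Projectivization K V) : x.rep ∈ x.submodule := by
  rw [Projectivization.submodule_eq]; exact Submodule.mem_span_singleton_self _

/-- weights sum to one -/
lemma sum_w {α : Type*} (p : ℝ) (S : Finset α) :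
    ∑ A ∈ S.powerset, p ^ A.card * (1 - p) ^ (S.card - A.card) = 1 := by
  classical
  have h := Finset.prod_add (fun _ : α => p) (fun _ : α => 1 - p) S
  have h1 : ∀ t ∈ S.powerset, (∏ _i ∈ t, p) * ∏ _i ∈ S \ t, (1 - p)
      = p ^ t.card * (1 - p) ^ (S.card - t.card) := by
    intro t ht
    rw [Finset.mem_powerset] at ht
    rw [Finset.prod_const, Finset.prod_const, Finset.card_sdiff_of_subset ht]
  rw [Finset.sum_congr rfl h1] at h
  rw [← h]
  have h2 : p + (1 - p) = 1 := by ring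
  rw [Finset.prod_congr rfl fun _ _ => h2, Finset.prod_const, one_pow]

lemma sum_w_subset {α : Type*} (p : ℝ) {S J : Finset α} (hJ : J ⊆ S) :
    ∑ Γ ∈ S.powerset.filter (fun Γ => J ⊆ Γ), p ^ Γ.card * (1 - p) ^ (S.card - Γ.card)
      = p ^ J.card := by
  classical
  have key : ∑ Γ ∈ S.powerset.filter (fun Γ => J ⊆ Γ),
        p ^ Γ.card * (1 - p) ^ (S.card - Γ.card)
      = ∑ A ∈ (S \ J).powerset, p ^ J.card * (p ^ A.card * (1 - p) ^ ((S \ J).card - A.card)) := by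
    refine Finset.sum_nbij' (i := fun Γ => Γ \ J) (j := fun A => A ∪ J) ?_ ?_ ?_ ?_ ?_
    · intro Γ hΓ
      rw [Finset.mem_filter, Finset.mem_powerset] at hΓ
      rw [Finset.mem_powerset]
      exact Finset.sdiff_subset_sdiff hΓ.1 (le_refl J)
    · intro A hA
      rw [Finset.mem_powerset] at hA
      rw [Finset.mem_filter, Finset.mem_powerset]
      exact ⟨Finset.union_subset (hA.trans (Finset.sdiff_subset)) hJ, Finset.subset_union_right⟩
    · intro Γ hΓ
      rw [Finset.mem_filter] at hΓ
      exact Finset.sdiff_union_of_subset hΓ.2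
    · intro A hA
      rw [Finset.mem_powerset] at hA
      exact Finset.union_sdiff_cancel_right
        (Finset.disjoint_of_subset_left hA Finset.sdiff_disjoint)
    · intro Γ hΓ
      rw [Finset.mem_filter, Finset.mem_powerset] at hΓ
      obtain ⟨hΓS, hJΓ⟩ := hΓ
      have hc1 : (Γ \ J).card = Γ.card - J.card := Finset.card_sdiff_of_subset hJΓ
      have hc2 : (S \ J).card = S.card - J.card := Finset.card_sdiff_of_subset hJ
      have hle1 : J.card ≤ Γ.card := Finset.card_le_card hJΓ
      have hle2 : Γ.card ≤ S.card := Finset.card_le_card hΓS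
      have e1 : Γ.card = J.card + (Γ \ J).card := by omega
      have e2 : (S \ J).card - (Γ \ J).card = S.card - Γ.card := by omega
      rw [e2, e1, pow_add]
      ring
  rw [key, ← Finset.mul_sum, sum_w, mul_one]

lemma geom_mul (q : ℕ) (d : ℕ) (hq : 1 ≤ q) :
    (∑ i ∈ Finset.range d, q ^ i) * (q - 1) = q ^ d - 1 := by
  induction d with
  | zero => simp
  | succ n ih =>
    rw [Finset.sum_range_succ, add_mul, ih]
    have h1 : 1 ≤ q ^ n := Nat.one_le_pow _ _ (by omega)
    have h2 : q ^ n * (q - 1) = q ^ n * q - q ^ n := by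
      rw [Nat.mul_sub, mul_one]
    have h3 : q ^ (n + 1) = q ^ n * q := pow_succ q n
    have h4 : q ^ n ≤ q ^ n * q := Nat.le_mul_of_pos_right _ (by omega)
    omega

lemma sum_pow_le (q t : ℕ) (ht : 1 ≤ t) :
    ∑ i ∈ Finset.range t, q ^ i ≤ (q + 1) ^ (t - 1) := by
  have h := add_pow q 1 (t - 1)
  have ht1 : t - 1 + 1 = t := by omega
  rw [ht1] at h
  simp only [one_pow, mul_one] at h
  rw [h]
  refine Finset.sum_le_sum ?_
  intro i hi
  rw [Finset.mem_range] at hi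
  have : 0 < (t - 1).choose i := Nat.choose_pos (by omega)
  exact Nat.le_mul_of_pos_right _ this

lemma three_pow (m : ℕ) :
    ∑ i ∈ Finset.range (m + 1), m.choose i * 2 ^ i = 3 ^ m := by
  have h := add_pow 2 1 m
  simp only [one_pow, mul_one] at h
  norm_num at h
  rw [h]
  refine Finset.sum_congr rfl ?_
  intro i _
  ring

lemma card_proj_mul [Fintype F] {V : Type*} [AddCommGroup V] [Module F V] [Fintype V]
    (W : Submodule F V) :
    (Finset.univ.filter (fun x : Projectivization F V => x.submodule ≤ W)).card
        * (Fintype.card F - 1)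
      = Fintype.card F ^ (Module.finrank F ↥W) - 1 := by
  classical
  rw [← Fintype.card_subtype]
  have hf : ∀ z : {x : Projectivization F V // x.submodule ≤ W} × Fˣ,
      ((z.2 : F) • z.1.1.rep ∈ W) ∧ ((z.2 : F) • z.1.1.rep ≠ 0) := by
    intro z
    constructor
    · exact W.smul_mem _ (z.1.2 (rep_mem z.1.1))
    · exact smul_ne_zero (Units.ne_zero z.2) (Projectivization.rep_nonzero z.1.1)
  let f : {x : Projectivization F V // x.submodule ≤ W} × Fˣ → {w : ↥W // w ≠ 0} :=
    fun z => ⟨⟨(z.2 : F) • z.1.1.rep, (hf z).1⟩,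
      fun h => (hf z).2 (by simpa [Subtype.ext_iff] using h)⟩
  have hbij : Function.Bijective f := by
    constructor
    · rintro ⟨⟨x, hx⟩, u⟩ ⟨⟨y, hy⟩, w⟩ h
      have hv : (u : F) • x.rep = (w : F) • y.rep := by
        simpa [f, Subtype.ext_iff] using h
      have hxy : x = y := by
        have h1 : Projectivization.mk F ((u : F) • x.rep)
            (smul_ne_zero (Units.ne_zero u) (Projectivization.rep_nonzero x))
            = Projectivization.mk F x.rep (Projectivization.rep_nonzero x) := by
          rw [Projectivization.mk_eq_mk_iff]
          exact ⟨u, rfl⟩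
        have h2 : Projectivization.mk F ((w : F) • y.rep)
            (smul_ne_zero (Units.ne_zero w) (Projectivization.rep_nonzero y))
            = Projectivization.mk F y.rep (Projectivization.rep_nonzero y) := by
          rw [Projectivization.mk_eq_mk_iff]
          exact ⟨w, rfl⟩
        have h3 : Projectivization.mk F ((u : F) • x.rep)
            (smul_ne_zero (Units.ne_zero u) (Projectivization.rep_nonzero x))
            = Projectivization.mk F ((w : F) • y.rep)
            (smul_ne_zero (Units.ne_zero w) (Projectivization.rep_nonzero y)) := by
          congr 1
        rw [h1, h2, Projectivization.mk_rep, Projectivization.mk_rep] at h3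
        exact h3
      subst hxy
      have huw : (u : F) = (w : F) :=
        smul_left_injective F (Projectivization.rep_nonzero x) hv
      exact Prod.ext (Subtype.ext rfl) (Units.ext huw)
    · rintro ⟨⟨v, hvW⟩, hne⟩
      have hv0 : v ≠ 0 := fun h => hne (by simp [Subtype.ext_iff, h])
      set x := Projectivization.mk F v hv0 with hxdef
      have hmk : Projectivization.mk F x.rep (Projectivization.rep_nonzero x)
          = Projectivization.mk F v hv0 := by rw [Projectivization.mk_rep]
      rw [Projectivization.mk_eq_mk_iff] at hmk
      obtain ⟨a, ha⟩ := hmk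
      have hxW : x.submodule ≤ W := by
        rw [hxdef, Projectivization.submodule_mk]
        rw [Submodule.span_singleton_le_iff_mem]
        exact hvW
      refine ⟨⟨⟨x, hxW⟩, a⁻¹⟩, ?_⟩
      have hval : (↑a⁻¹ : F) • x.rep = v := by
        rw [← Units.smul_def, ← ha]
        exact inv_smul_smul a v
      exact Subtype.ext (Subtype.ext hval)
  have hcard := Fintype.card_congr (Equiv.ofBijective f hbij)
  rw [Fintype.card_prod, Fintype.card_units] at hcard
  have h2 : Fintype.card {w : ↥W // w ≠ 0} = Fintype.card ↥W - 1 := by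
    have := Fintype.card_subtype_compl (fun w : ↥W => w = 0)
    have h1 : Fintype.card {w : ↥W // w = 0} = 1 := Fintype.card_subtype_eq (0 : ↥W)
    simp only [h1] at this
    convert this using 2
  have h3 : Fintype.card ↥W = Fintype.card F ^ (Module.finrank F ↥W) :=
    Module.card_eq_pow_finrank
  rw [h2, h3] at hcard
  exact hcard

lemma card_proj_eq [Fintype F] {V : Type*} [AddCommGroup V] [Module F V] [Fintype V]
    (W : Submodule F V) :
    (Finset.univ.filter (fun x : Projectivization F V => x.submodule ≤ W)).card
      = ∑ i ∈ Finset.range (Module.finrank F ↥W), Fintype.card F ^ i := by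
  have hq : 2 ≤ Fintype.card F := Fintype.one_lt_card
  have h1 := card_proj_mul (F := F) W
  have h2 := geom_mul (Fintype.card F) (Module.finrank F ↥W) (by omega)
  exact Nat.eq_of_mul_eq_mul_right (by omega) (h1.trans h2.symm)

lemma expec_congr (p : ℝ) {k : ℕ} (S : Finset (Pt F k)) {Y Z : Finset (Pt F k) → ℝ}
    (h : ∀ Γ, Γ ⊆ S → Y Γ = Z Γ) : expec p S Y = expec p S Z :=
  Finset.sum_congr rfl (fun Γ hΓ => by rw [h Γ (Finset.mem_powerset.mp hΓ)])

lemma expec_sum_ind {β : Type*} (p : ℝ) {k : ℕ} (S : Finset (Pt F k)) (I : Finset β)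
    (Jf : β → Finset (Pt F k)) (hJ : ∀ b ∈ I, Jf b ⊆ S) :
    expec p S (fun Γ => ∑ b ∈ I, if Jf b ⊆ Γ then (1:ℝ) else 0)
      = ∑ b ∈ I, p ^ (Jf b).card := by
  unfold expec
  calc ∑ Γ ∈ S.powerset, bwt p S Γ * ∑ b ∈ I, (if Jf b ⊆ Γ then (1:ℝ) else 0)
      = ∑ Γ ∈ S.powerset, ∑ b ∈ I, (if Jf b ⊆ Γ then bwt p S Γ else 0) := by
        refine Finset.sum_congr rfl fun Γ _ => ?_
        rw [Finset.mul_sum]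
        exact Finset.sum_congr rfl fun b _ => by rw [mul_ite, mul_one, mul_zero]
    _ = ∑ b ∈ I, ∑ Γ ∈ S.powerset, (if Jf b ⊆ Γ then bwt p S Γ else 0) := Finset.sum_comm
    _ = ∑ b ∈ I, p ^ (Jf b).card := by
        refine Finset.sum_congr rfl fun b hb => ?_
        rw [← Finset.sum_filter]
        simpa [bwt] using sum_w_subset p (hJ b hb)

lemma expec_finsum {β : Type*} (p : ℝ) {k : ℕ} (S : Finset (Pt F k)) (U : Finset β)
    (f : β → Finset (Pt F k) → ℝ) :
    expec p S (fun Γ => ∑ u ∈ U, f u Γ) = ∑ u ∈ U, expec p S (f u) := by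
  unfold expec
  simp_rw [Finset.mul_sum]
  rw [Finset.sum_comm]

section Geom

variable {m k : ℕ}

/-- the relation map: coefficients supported on `S` to the combination of `P i, Q i`. -/
def Phi (P Q : Fin m → Fin k → F) (S : Finset (Fin m)) :
    ({i // i ∈ S} → F × F) →ₗ[F] (Fin k → F) where
  toFun g := ∑ i : {i // i ∈ S}, ((g i).1 • P i.1 + (g i).2 • Q i.1)
  map_add' g h := by
    rw [← Finset.sum_add_distrib]
    refine Finset.sum_congr rfl fun i _ => ?_
    simp only [Pi.add_apply, Prod.fst_add, Prod.snd_add, add_smul]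
    module
  map_smul' c g := by
    simp only [RingHom.id_apply, Finset.smul_sum]
    refine Finset.sum_congr rfl fun i _ => ?_
    simp only [Pi.smul_apply, Prod.smul_fst, Prod.smul_snd, smul_eq_mul, mul_smul]
    module

lemma Phi_apply (P Q : Fin m → Fin k → F) (S : Finset (Fin m)) (g : {i // i ∈ S} → F × F) :
    Phi P Q S g = ∑ i : {i // i ∈ S}, ((g i).1 • P i.1 + (g i).2 • Q i.1) := rfl

variable {P Q : Fin m → Fin k → F}

lemma finrank_ker_Phi
    (hgen : ∀ T : Finset (Fin m ⊕ Fin m), T.card ≤ k →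
      LinearIndependent F (fun t : {x // x ∈ T} => Sum.elim P Q (t : Fin m ⊕ Fin m)))
    {S : Finset (Fin m)} (hS : k ≤ 2 * S.card) :
    Module.finrank F ↥(LinearMap.ker (Phi P Q S)) + k ≤ 2 * S.card := by
  obtain ⟨T, hTsub, hTcard⟩ := Finset.exists_subset_card_eq
    (show k ≤ (S.disjSum S).card by rw [Finset.card_disjSum]; omega)
  have hli := hgen T (le_of_eq hTcard)
  have hmem : ∀ t : {x // x ∈ T}, Sum.elim P Q t.1 ∈ LinearMap.range (Phi P Q S) := by
    rintro ⟨t, ht⟩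
    have hmem2 := hTsub ht
    cases t with
    | inl i =>
      have hi : i ∈ S := Finset.inl_mem_disjSum.mp hmem2
      refine ⟨Pi.single ⟨i, hi⟩ ((1 : F), (0 : F)), ?_⟩
      rw [Phi_apply]
      rw [Fintype.sum_eq_single (⟨i, hi⟩ : {i // i ∈ S})
        (fun j hj => by simp [Pi.single_eq_of_ne hj])]
      simp
    | inr i =>
      have hi : i ∈ S := Finset.inr_mem_disjSum.mp hmem2
      refine ⟨Pi.single ⟨i, hi⟩ ((0 : F), (1 : F)), ?_⟩
      rw [Phi_apply]
      rw [Fintype.sum_eq_single (⟨i, hi⟩ : {i // i ∈ S})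
        (fun j hj => by simp [Pi.single_eq_of_ne hj])]
      simp
  have h1 : Submodule.span F (Set.range fun t : {x // x ∈ T} => Sum.elim P Q t.1)
      ≤ LinearMap.range (Phi P Q S) := by
    rw [Submodule.span_le]
    rintro _ ⟨t, rfl⟩
    exact hmem t
  have h2 : k ≤ Module.finrank F ↥(LinearMap.range (Phi P Q S)) := by
    have he := finrank_span_eq_card hli
    rw [Fintype.card_coe, hTcard] at he
    exact le_trans (le_of_eq he.symm) (Submodule.finrank_mono h1)
  have h3 := LinearMap.finrank_range_add_finrank_ker (Phi P Q S)
  have h4 : Module.finrank F ({i // i ∈ S} → F × F) = 2 * S.card := by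
    rw [Module.finrank_pi_fintype]
    simp only [Module.finrank_prod, Module.finrank_self]
    rw [Finset.sum_const, Finset.card_univ, Fintype.card_coe, smul_eq_mul]
    ring
  omega

lemma dep_iff_rel {T : Finset (Pt F k)} :
    Dep T ↔ ∃ g : Pt F k → F, ∑ x ∈ T, g x • x.rep = 0 ∧ ∃ x ∈ T, g x ≠ 0 := by
  have hps : pspan (T : Set (Pt F k))
      = Submodule.span F (Set.range fun x : {x // x ∈ T} => (x.1).rep) := by
    unfold pspan
    have h1 : (Set.range fun x : {x // x ∈ T} => (x.1).rep)
        = ⋃ x ∈ (T : Set (Pt F k)), {Projectivization.rep x} := by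
      ext v
      simp only [Set.mem_range, Set.mem_iUnion, Set.mem_singleton_iff]
      constructor
      · rintro ⟨⟨x, hx⟩, rfl⟩; exact ⟨x, by simpa using hx, rfl⟩
      · rintro ⟨x, hx, rfl⟩; exact ⟨⟨x, by simpa using hx⟩, rfl⟩
    rw [h1, Submodule.span_iUnion₂]
    refine iSup_congr fun x => iSup_congr fun hx => ?_
    exact Projectivization.submodule_eq x
  have hfr_le : Module.finrank F
      ↥(Submodule.span F (Set.range fun x : {x // x ∈ T} => (x.1).rep)) ≤ T.card := by
    have h2 : (Set.range fun x : {x // x ∈ T} => (x.1).rep)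
        = ↑(T.image Projectivization.rep) := by
      ext v
      simp only [Set.mem_range, Finset.coe_image, Set.mem_image, Finset.mem_coe]
      constructor
      · rintro ⟨⟨x, hx⟩, rfl⟩; exact ⟨x, hx, rfl⟩
      · rintro ⟨x, hx, rfl⟩; exact ⟨⟨x, hx⟩, rfl⟩
    rw [h2]
    exact le_trans (finrank_span_finset_le_card _) (Finset.card_image_le)
  have hli_iff : LinearIndependent F (fun x : {x // x ∈ T} => (x.1).rep)
      ↔ Fintype.card {x // x ∈ T}
        = Set.finrank F (Set.range fun x : {x // x ∈ T} => (x.1).rep) :=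
    linearIndependent_iff_card_eq_finrank_span
  have hdep_iff : Dep T ↔ ¬ LinearIndependent F (fun x : {x // x ∈ T} => (x.1).rep) := by
    rw [Dep, hps, hli_iff, Fintype.card_coe]
    unfold Set.finrank
    constructor
    · intro h he
      omega
    · intro h
      rcases lt_or_eq_of_le hfr_le with h1 | h1
      · omega
      · exact absurd h1.symm h
  rw [hdep_iff, Fintype.not_linearIndependent_iff]
  constructor
  · rintro ⟨g', hsum, i, hi⟩
    refine ⟨fun x => if h : x ∈ T then g' ⟨x, h⟩ else 0, ?_, i.1, i.2, by simp [i.2]; exact hi⟩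
    rw [← Finset.sum_attach T (fun x => (if h : x ∈ T then g' ⟨x, h⟩ else 0) • x.rep)]
    rw [← hsum, Finset.univ_eq_attach]
    refine Finset.sum_congr rfl fun x _ => ?_
    simp [x.2]
  · rintro ⟨g, hsum, x, hx, hgx⟩
    refine ⟨fun i => g i.1, ?_, ⟨x, hx⟩, hgx⟩
    rw [Finset.univ_eq_attach, Finset.sum_attach T (fun x => g x • x.rep)]
    exact hsum

lemma circuit_support {D : Finset (Pt F k)} (hC : IsCircuit D) {g : Pt F k → F}
    (hsum : ∑ x ∈ D, g x • x.rep = 0) (hx : ∃ x ∈ D, g x ≠ 0)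
    {x₀ : Pt F k} (hx₀ : x₀ ∈ D) : g x₀ ≠ 0 := by
  intro h0
  obtain ⟨x₁, hx₁, hg1⟩ := hx
  have hne : x₁ ≠ x₀ := fun h => hg1 (h ▸ h0)
  refine hC.2 _ (Finset.erase_ssubset hx₀) ?_
  rw [dep_iff_rel]
  refine ⟨g, ?_, ⟨x₁, Finset.mem_erase.mpr ⟨hne, hx₁⟩, hg1⟩⟩
  rw [Finset.sum_erase _ (by rw [h0, zero_smul])]
  exact hsum

variable {L : Fin m → Submodule F (Fin k → F)}

/-- convenient form of the general position assumption -/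
lemma gen' (hgen : ∀ T : Finset (Fin m ⊕ Fin m), T.card ≤ k →
      LinearIndependent F (fun t : {x // x ∈ T} => Sum.elim P Q (t : Fin m ⊕ Fin m)))
    (T : Finset (Fin m ⊕ Fin m)) (hT : T.card ≤ k) (g : Fin m ⊕ Fin m → F)
    (hsum : ∑ t ∈ T, g t • Sum.elim P Q t = 0) : ∀ t ∈ T, g t = 0 := by
  intro t ht
  have h := hgen T hT
  rw [Fintype.linearIndependent_iff] at h
  refine h (fun t => g t.1) ?_ ⟨t, ht⟩
  rw [← Finset.sum_attach T (fun t => g t • Sum.elim P Q t)] at hsum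
  simpa [Finset.univ_eq_attach] using hsum

lemma line_eq_zero (hL : ∀ i, L i = Submodule.span F {P i, Q i})
    (hgen : ∀ T : Finset (Fin m ⊕ Fin m), T.card ≤ k →
      LinearIndependent F (fun t : {x // x ∈ T} => Sum.elim P Q (t : Fin m ⊕ Fin m)))
    (hk4 : 4 ≤ k) {i j : Fin m} (hij : i ≠ j) {v : Fin k → F}
    (hvi : v ∈ L i) (hvj : v ∈ L j) : v = 0 := by
  rw [hL i, Submodule.mem_span_pair] at hvi
  obtain ⟨a, b, hab⟩ := hvi
  rw [hL j, Submodule.mem_span_pair] at hvj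
  obtain ⟨c, d, hcd⟩ := hvj
  set g : Fin m ⊕ Fin m → F := Sum.elim
    (fun r => if r = i then a else if r = j then -c else 0)
    (fun r => if r = i then b else if r = j then -d else 0) with hg
  set T : Finset (Fin m ⊕ Fin m) := {Sum.inl i, Sum.inr i, Sum.inl j, Sum.inr j} with hT
  have hc4 : T.card ≤ k := by
    refine le_trans ?_ hk4
    refine le_trans (Finset.card_insert_le _ _) (Nat.succ_le_succ ?_)
    refine le_trans (Finset.card_insert_le _ _) (Nat.succ_le_succ ?_)
    refine le_trans (Finset.card_insert_le _ _) (Nat.succ_le_succ ?_)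
    simp
  have h1 : Sum.inl i ∉ ({Sum.inr i, Sum.inl j, Sum.inr j} : Finset (Fin m ⊕ Fin m)) := by
    simp [hij]
  have h2 : Sum.inr i ∉ ({Sum.inl j, Sum.inr j} : Finset (Fin m ⊕ Fin m)) := by
    simp [hij]
  have h3 : Sum.inl j ∉ ({Sum.inr j} : Finset (Fin m ⊕ Fin m)) := by simp
  have hsum : ∑ t ∈ T, g t • Sum.elim P Q t = 0 := by
    rw [hT, Finset.sum_insert h1, Finset.sum_insert h2, Finset.sum_insert h3,
      Finset.sum_singleton]
    simp only [hg, Sum.elim_inl, Sum.elim_inr, if_neg hij.symm, if_neg hij, eq_self_iff_true, if_true]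
    have : a • P i + (b • Q i + ((-c) • P j + (-d) • Q j))
        = (a • P i + b • Q i) - (c • P j + d • Q j) := by module
    rw [this, hab, hcd, sub_self]
  have hz := gen' hgen T hc4 g hsum
  have ha : a = 0 := by
    have := hz (Sum.inl i) (by simp [hT])
    simpa [hg] using this
  have hb : b = 0 := by
    have := hz (Sum.inr i) (by simp [hT])
    simpa [hg] using this
  rw [← hab, ha, hb, zero_smul, zero_smul, add_zero]

lemma line_unique (hL : ∀ i, L i = Submodule.span F {P i, Q i})
    (hgen : ∀ T : Finset (Fin m ⊕ Fin m), T.card ≤ k →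
      LinearIndependent F (fun t : {x // x ∈ T} => Sum.elim P Q (t : Fin m ⊕ Fin m)))
    (hk4 : 4 ≤ k) {x : Pt F k} {i j : Fin m}
    (hi : x.submodule ≤ L i) (hj : x.submodule ≤ L j) : i = j := by
  by_contra hij
  exact Projectivization.rep_nonzero x
    (line_eq_zero hL hgen hk4 hij (hi (rep_mem x)) (hj (rep_mem x)))

lemma finrank_line (hL : ∀ i, L i = Submodule.span F {P i, Q i})
    (hgen : ∀ T : Finset (Fin m ⊕ Fin m), T.card ≤ k →
      LinearIndependent F (fun t : {x // x ∈ T} => Sum.elim P Q (t : Fin m ⊕ Fin m)))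
    (hk4 : 4 ≤ k) (i : Fin m) : Module.finrank F ↥(L i) = 2 := by
  have hli : LinearIndependent F ![P i, Q i] := by
    rw [LinearIndependent.pair_iff]
    intro a b hab
    set g : Fin m ⊕ Fin m → F := Sum.elim
      (fun r => if r = i then a else 0) (fun r => if r = i then b else 0) with hg
    set T : Finset (Fin m ⊕ Fin m) := {Sum.inl i, Sum.inr i} with hT
    have hc : T.card ≤ k := by
      refine le_trans ?_ hk4
      refine le_trans (Finset.card_insert_le _ _) (Nat.succ_le_succ ?_)
      simp
    have h1 : Sum.inl i ∉ ({Sum.inr i} : Finset (Fin m ⊕ Fin m)) := by simp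
    have hsum : ∑ t ∈ T, g t • Sum.elim P Q t = 0 := by
      rw [hT, Finset.sum_insert h1, Finset.sum_singleton]
      simpa [hg] using hab
    have hz := gen' hgen T hc g hsum
    constructor
    · have := hz (Sum.inl i) (by simp [hT]); simpa [hg] using this
    · have := hz (Sum.inr i) (by simp [hT]); simpa [hg] using this
  have hr := finrank_span_eq_card hli
  have hrange : Set.range ![P i, Q i] = {P i, Q i} := by
    simp only [Matrix.range_cons, Matrix.range_empty, Set.union_empty,
      Set.union_singleton]
    exact Set.pair_comm _ _
  rw [hrange] at hr
  rw [hL i, hr]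
  simp

lemma circuit_rel (hL : ∀ i, L i = Submodule.span F {P i, Q i})
    (hgen : ∀ T : Finset (Fin m ⊕ Fin m), T.card ≤ k →
      LinearIndependent F (fun t : {x // x ∈ T} => Sum.elim P Q (t : Fin m ⊕ Fin m)))
    (hk4 : 4 ≤ k) {D : Finset (Pt F k)} (hD : CrossingCircuit L D) (hne : D.Nonempty)
    {S : Finset (Fin m)} (hS : ∀ i, i ∈ S ↔ ∃ x ∈ D, x.submodule ≤ L i) :
    ∃ μ : ({i // i ∈ S} → F × F), μ ∈ LinearMap.ker (Phi P Q S) ∧ μ ≠ 0 ∧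
      ∀ x : Pt F k, x ∈ D ↔ ∃ i : {i // i ∈ S},
        x.submodule = Submodule.span F {(μ i).1 • P i.1 + (μ i).2 • Q i.1} := by
  obtain ⟨g, hsum, hex⟩ := dep_iff_rel.mp hD.1.1
  have hsupp : ∀ x ∈ D, g x ≠ 0 := fun x hx => circuit_support hD.1 hsum hex hx
  have hpt : ∀ i : {i // i ∈ S}, ∃ x, x ∈ D ∧ x.submodule ≤ L i.1 := by
    rintro ⟨i, hi⟩
    obtain ⟨x, hx, hxl⟩ := (hS i).mp hi
    exact ⟨x, hx, hxl⟩
  choose pt hptD hptL using hpt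
  have huniq : ∀ (i : Fin m) (x y : Pt F k), x ∈ D → y ∈ D →
      x.submodule ≤ L i → y.submodule ≤ L i → x = y := by
    intro i x y hx hy hxi hyi
    have hc := hD.2.2 i
    rw [Finset.card_le_one] at hc
    exact hc _ (Finset.mem_filter.mpr ⟨hx, hxi⟩) _ (Finset.mem_filter.mpr ⟨hy, hyi⟩)
  have hline : ∀ x ∈ D, ∃ i : {i // i ∈ S}, pt i = x := by
    intro x hx
    obtain ⟨i, hi⟩ := hD.2.1 x hx
    have hiS : i ∈ S := (hS i).mpr ⟨x, hx, hi⟩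
    exact ⟨⟨i, hiS⟩, huniq i _ _ (hptD _) hx (hptL _) hi⟩
  have hcoef : ∀ i : {i // i ∈ S}, ∃ a b : F, a • P i.1 + b • Q i.1 = (pt i).rep := by
    intro i
    have hm := hptL i (rep_mem (pt i))
    rw [hL i.1, Submodule.mem_span_pair] at hm
    exact hm
  choose av bv hab using hcoef
  set μ : {i // i ∈ S} → F × F := fun i => (g (pt i) * av i, g (pt i) * bv i) with hμ
  have hcvec : ∀ i : {i // i ∈ S},
      (μ i).1 • P i.1 + (μ i).2 • Q i.1 = g (pt i) • (pt i).rep := by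
    intro i
    simp only [hμ]
    rw [← hab i, mul_smul, mul_smul, ← smul_add]
  have hinj : ∀ i j : {i // i ∈ S}, pt i = pt j → i = j := by
    intro i j he
    exact Subtype.ext (line_unique hL hgen hk4 (hptL i) (he ▸ hptL j))
  refine ⟨μ, ?_, ?_, ?_⟩
  · rw [LinearMap.mem_ker, Phi_apply]
    rw [Finset.sum_congr rfl (fun i _ => hcvec i)]
    rw [← hsum]
    exact Finset.sum_bij (fun i _ => pt i) (fun i _ => hptD i)
      (fun i _ j _ h => hinj i j h)
      (fun x hx => by obtain ⟨i, hi⟩ := hline x hx; exact ⟨i, Finset.mem_univ i, hi⟩)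
      (fun i _ => rfl)
  · obtain ⟨x, hx⟩ := hne
    obtain ⟨i, hi⟩ := hline x hx
    intro h0
    have hz : g (pt i) • (pt i).rep = 0 := by
      rw [← hcvec i, h0]
      simp
    exact smul_ne_zero (hsupp _ (hptD i)) (Projectivization.rep_nonzero _) hz
  · intro x
    constructor
    · intro hx
      obtain ⟨i, hi⟩ := hline x hx
      refine ⟨i, ?_⟩
      rw [hcvec i, hi, Projectivization.submodule_eq]
      exact (Submodule.span_singleton_smul_eq
        (IsUnit.mk0 _ (hsupp x hx)) _).symm
    · rintro ⟨i, hi⟩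
      have h2 : (pt i).submodule
          = Submodule.span F {(μ i).1 • P i.1 + (μ i).2 • Q i.1} := by
        rw [hcvec i, Projectivization.submodule_eq]
        exact (Submodule.span_singleton_smul_eq
          (IsUnit.mk0 _ (hsupp _ (hptD i))) _).symm
      have h3 := Projectivization.submodule_injective (hi.trans h2.symm)
      rw [h3]
      exact hptD i
set_option maxHeartbeats 1000000 in
lemma card_circuits_le [Fintype F]
    (hL : ∀ i, L i = Submodule.span F {P i, Q i})
    (hgen : ∀ T : Finset (Fin m ⊕ Fin m), T.card ≤ k →
      LinearIndependent F (fun t : {x // x ∈ T} => Sum.elim P Q (t : Fin m ⊕ Fin m)))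
    (hk4 : 4 ≤ k) (ΩF : Finset (Pt F k)) (u : ℕ) (hu : k + 1 ≤ 2 * u) :
    (ΩF.powerset.filter (fun D => CrossingCircuit L D ∧ D.card = u)).card
      ≤ m.choose u * ∑ i ∈ Finset.range (2 * u - k), (Fintype.card F) ^ i := by
  classical
  set CC := ΩF.powerset.filter (fun D => CrossingCircuit L D ∧ D.card = u) with hCC
  set lineSet : Finset (Pt F k) → Finset (Fin m) :=
    fun D => Finset.univ.filter (fun i => ∃ x ∈ D, x.submodule ≤ L i) with hls
  have hmemls : ∀ D (i : Fin m), i ∈ lineSet D ↔ ∃ x ∈ D, x.submodule ≤ L i := by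
    intro D i; simp [hls]
  have hLS : ∀ D ∈ CC, (lineSet D).card = u := by
    intro D hDCC
    rw [hCC, Finset.mem_filter] at hDCC
    obtain ⟨_, hD, hcard⟩ := hDCC
    have huniq : ∀ (i : Fin m) (x y : Pt F k), x ∈ D → y ∈ D →
        x.submodule ≤ L i → y.submodule ≤ L i → x = y := by
      intro i x y hx hy hxi hyi
      have hc := hD.2.2 i
      rw [Finset.card_le_one] at hc
      exact hc _ (Finset.mem_filter.mpr ⟨hx, hxi⟩) _ (Finset.mem_filter.mpr ⟨hy, hyi⟩)
    rw [← hcard]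
    refine (Finset.card_bij (fun x hx => (hD.2.1 x hx).choose) ?_ ?_ ?_).symm
    · intro x hx
      rw [hmemls]
      exact ⟨x, hx, (hD.2.1 x hx).choose_spec⟩
    · intro x hx y hy he
      have he' : (hD.2.1 x hx).choose = (hD.2.1 y hy).choose := he
      have h1 := (hD.2.1 x hx).choose_spec
      rw [he'] at h1
      exact huniq _ x y hx hy h1 (hD.2.1 y hy).choose_spec
    · intro i hi
      rw [hmemls] at hi
      obtain ⟨x, hx, hxi⟩ := hi
      refine ⟨x, hx, ?_⟩
      exact line_unique hL hgen hk4 (hD.2.1 x hx).choose_spec hxi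
  rw [Finset.card_eq_sum_card_fiberwise (f := lineSet)
    (t := Finset.powersetCard u Finset.univ)
    (fun D hD => by rw [Finset.mem_coe, Finset.mem_powersetCard_univ]; exact hLS D hD)]
  have hfiber : ∀ S ∈ Finset.powersetCard u Finset.univ,
      (CC.filter (fun D => lineSet D = S)).card
        ≤ ∑ i ∈ Finset.range (2 * u - k), (Fintype.card F) ^ i := by
    intro S hSmem
    rw [Finset.mem_powersetCard_univ] at hSmem
    have hSk : k ≤ 2 * S.card := by omega
    -- the target finset of projective classes
    set tgt := Finset.univ.filter
      (fun x : Projectivization F ({i // i ∈ S} → F × F) =>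
        x.submodule ≤ LinearMap.ker (Phi P Q S)) with htgt
    have htgtcard : tgt.card ≤ ∑ i ∈ Finset.range (2 * u - k), (Fintype.card F) ^ i := by
      rw [htgt, card_proj_eq]
      refine Finset.sum_le_sum_of_subset ?_
      have := finrank_ker_Phi hgen hSk
      intro x hx
      rw [Finset.mem_range] at hx ⊢
      omega
    refine le_trans ?_ htgtcard
    -- injection from the fiber into tgt
    have hdata : ∀ D ∈ CC.filter (fun D => lineSet D = S),
        ∃ μ : ({i // i ∈ S} → F × F), μ ∈ LinearMap.ker (Phi P Q S) ∧ μ ≠ 0 ∧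
          ∀ x : Pt F k, x ∈ D ↔ ∃ i : {i // i ∈ S},
            x.submodule = Submodule.span F {(μ i).1 • P i.1 + (μ i).2 • Q i.1} := by
      intro D hDf
      rw [Finset.mem_filter] at hDf
      obtain ⟨hDCC, hDS⟩ := hDf
      rw [hCC, Finset.mem_filter] at hDCC
      obtain ⟨_, hD, hcard⟩ := hDCC
      refine circuit_rel hL hgen hk4 hD ?_ ?_
      · rw [← Finset.card_pos, hcard]; omega
      · intro i
        rw [← hDS, hmemls]
    choose! μf hμker hμne hμmem using hdata
    have hSne : S.Nonempty := Finset.card_pos.mp (by omega)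
    obtain ⟨i₀, hi₀⟩ := hSne
    have hnep : Nonempty (Projectivization F ({i // i ∈ S} → F × F)) := by
      refine ⟨Projectivization.mk F (Pi.single (⟨i₀, hi₀⟩ : {i // i ∈ S}) ((1:F),(0:F))) ?_⟩
      intro h
      simpa [Prod.ext_iff] using congrFun h ⟨i₀, hi₀⟩
    refine Finset.card_le_card_of_injOn
      (fun D => if h : D ∈ CC.filter (fun D => lineSet D = S) then
        Projectivization.mk F (μf D) (hμne D h) else Classical.ofNonempty) ?_ ?_
    · intro D hDf
      simp only [Finset.mem_coe] at hDf ⊢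
      simp only [dif_pos hDf]
      rw [htgt, Finset.mem_filter]
      refine ⟨Finset.mem_univ _, ?_⟩
      rw [Projectivization.submodule_mk, Submodule.span_singleton_le_iff_mem]
      exact hμker D hDf
    · intro D hDf D' hDf' he
      simp only [Finset.mem_coe] at hDf hDf'
      simp only [dif_pos hDf, dif_pos hDf'] at he
      rw [Projectivization.mk_eq_mk_iff] at he
      obtain ⟨a, ha⟩ := he
      -- μf D = a • μf D'
      refine Finset.ext fun x => ?_
      rw [hμmem D hDf x, hμmem D' hDf' x]
      constructor
      · rintro ⟨i, hi⟩
        refine ⟨i, ?_⟩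
        rw [hi, ← ha]
        have hl : ((a • μf D') i).1 • P i.1 + ((a • μf D') i).2 • Q i.1
            = (a : F) • ((μf D' i).1 • P i.1 + (μf D' i).2 • Q i.1) := by
          simp only [Pi.smul_apply, Prod.smul_fst, Prod.smul_snd, Units.smul_def,
            smul_eq_mul, mul_smul, smul_add]
        rw [hl, Submodule.span_singleton_smul_eq a.isUnit _]
      · rintro ⟨i, hi⟩
        refine ⟨i, ?_⟩
        rw [hi]
        rw [show μf D = a • μf D' from ha.symm]
        have hl : ((a • μf D') i).1 • P i.1 + ((a • μf D') i).2 • Q i.1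
            = (a : F) • ((μf D' i).1 • P i.1 + (μf D' i).2 • Q i.1) := by
          simp only [Pi.smul_apply, Prod.smul_fst, Prod.smul_snd, Units.smul_def,
            smul_eq_mul, mul_smul, smul_add]
        rw [hl, Submodule.span_singleton_smul_eq a.isUnit _]
  calc ∑ S ∈ Finset.powersetCard u Finset.univ, (CC.filter (fun D => lineSet D = S)).card
      ≤ ∑ S ∈ Finset.powersetCard u Finset.univ,
          ∑ i ∈ Finset.range (2 * u - k), (Fintype.card F) ^ i :=
        Finset.sum_le_sum hfiber
    _ = m.choose u * ∑ i ∈ Finset.range (2 * u - k), (Fintype.card F) ^ i := by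
        rw [Finset.sum_const, Finset.card_powersetCard, Finset.card_univ, Fintype.card_fin,
          smul_eq_mul]
lemma expec_Xu_eq (ΩF : Finset (Pt F k)) (hΩF : ∀ x, x ∈ ΩF ↔ ∃ i, x.submodule ≤ L i)
    (p : ℝ) (u : ℕ) :
    expec p ΩF (fun Γ => (Xu L u Γ : ℝ))
      = (((ΩF.powerset ×ˢ ΩF.powerset).filter (fun DJ =>
          CrossingCircuit L DJ.1 ∧ DJ.1.card = u ∧ DJ.2 ⊆ DJ.1 ∧ DJ.2.card = 2 * u - k)).card : ℝ)
        * p ^ (2 * u - k) := by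
  classical
  set Prs := (ΩF.powerset ×ˢ ΩF.powerset).filter (fun DJ =>
    CrossingCircuit L DJ.1 ∧ DJ.1.card = u ∧ DJ.2 ⊆ DJ.1 ∧ DJ.2.card = 2 * u - k) with hPrs
  have hXu : ∀ Γ, Γ ⊆ ΩF → ((Xu L u Γ : ℝ))
      = ∑ DJ ∈ Prs, if DJ.2 ⊆ Γ then (1:ℝ) else 0 := by
    intro Γ hΓ
    have hset : {DJ : Finset (Pt F k) × Finset (Pt F k) |
        CrossingCircuit L DJ.1 ∧ DJ.1.card = u ∧
        DJ.2 ⊆ DJ.1 ∩ Γ ∧ DJ.2.card = 2 * u - k}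
        = ↑(Prs.filter (fun DJ => DJ.2 ⊆ Γ)) := by
      ext DJ
      simp only [Set.mem_setOf_eq, Finset.coe_filter, hPrs, Finset.mem_filter,
        Finset.mem_product, Finset.mem_powerset, Set.mem_setOf_eq]
      constructor
      · rintro ⟨h1, h2, h3, h4⟩
        have hD1 : DJ.1 ⊆ ΩF := fun x hx => (hΩF x).mpr (h1.2.1 x hx)
        have h3' := Finset.subset_inter_iff.mp h3
        exact ⟨⟨⟨hD1, (h3'.1.trans hD1)⟩, h1, h2, h3'.1, h4⟩, h3'.2⟩
      · rintro ⟨⟨⟨hD1, hD2⟩, h1, h2, h3, h4⟩, h5⟩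
        exact ⟨h1, h2, Finset.subset_inter_iff.mpr ⟨h3, h5⟩, h4⟩
    rw [Xu, hset, Set.ncard_coe_finset, Finset.card_filter]
    rw [Nat.cast_sum]
    refine Finset.sum_congr rfl fun DJ _ => ?_
    split <;> simp
  rw [expec_congr p ΩF hXu, expec_sum_ind p ΩF Prs (fun DJ => DJ.2)
    (fun DJ hDJ => by
      rw [hPrs, Finset.mem_filter, Finset.mem_product] at hDJ
      exact Finset.mem_powerset.mp hDJ.1.2)]
  have hconst : ∑ DJ ∈ Prs, p ^ DJ.2.card = ∑ _DJ ∈ Prs, p ^ (2 * u - k) :=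
    Finset.sum_congr rfl (fun DJ hDJ => by
      rw [hPrs, Finset.mem_filter] at hDJ
      rw [hDJ.2.2.2.2])
  rw [hconst, Finset.sum_const, nsmul_eq_mul]

lemma card_pairs (ΩF : Finset (Pt F k)) (u : ℕ) :
    ((ΩF.powerset ×ˢ ΩF.powerset).filter (fun DJ =>
        CrossingCircuit L DJ.1 ∧ DJ.1.card = u ∧ DJ.2 ⊆ DJ.1 ∧ DJ.2.card = 2 * u - k)).card
      = (ΩF.powerset.filter (fun D => CrossingCircuit L D ∧ D.card = u)).card
        * u.choose (2 * u - k) := by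
  classical
  set Prs := (ΩF.powerset ×ˢ ΩF.powerset).filter (fun DJ =>
    CrossingCircuit L DJ.1 ∧ DJ.1.card = u ∧ DJ.2 ⊆ DJ.1 ∧ DJ.2.card = 2 * u - k) with hPrs
  set CC := ΩF.powerset.filter (fun D => CrossingCircuit L D ∧ D.card = u) with hCC
  rw [Finset.card_eq_sum_card_fiberwise (f := fun DJ => DJ.1) (t := CC) (fun DJ hDJ => by
    simp only [Finset.mem_coe, hPrs, Finset.mem_filter, Finset.mem_product] at hDJ
    simp only [Finset.mem_coe, hCC, Finset.mem_filter]
    exact ⟨hDJ.1.1, hDJ.2.1, hDJ.2.2.1⟩)]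
  have hfib : ∀ D ∈ CC, (Prs.filter (fun DJ => DJ.1 = D)).card = u.choose (2 * u - k) := by
    intro D hD
    rw [hCC, Finset.mem_filter, Finset.mem_powerset] at hD
    have hb : (Prs.filter (fun DJ => DJ.1 = D)).card
        = (D.powersetCard (2 * u - k)).card := by
      refine (Finset.card_bij (fun J _ => (D, J)) ?_ ?_ ?_).symm
      · intro J hJ
        rw [Finset.mem_powersetCard] at hJ
        rw [Finset.mem_filter, hPrs, Finset.mem_filter, Finset.mem_product]
        exact ⟨⟨⟨Finset.mem_powerset.mpr hD.1, Finset.mem_powerset.mpr (hJ.1.trans hD.1)⟩,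
          hD.2.1, hD.2.2, hJ.1, hJ.2⟩, rfl⟩
      · intro J _ J' _ h
        exact (Prod.ext_iff.mp h).2
      · intro DJ hDJ
        rw [Finset.mem_filter, hPrs, Finset.mem_filter] at hDJ
        obtain ⟨⟨_, _, _, h3, h4⟩, h5⟩ := hDJ
        refine ⟨DJ.2, ?_, ?_⟩
        · rw [Finset.mem_powersetCard]
          exact ⟨h5 ▸ h3, h4⟩
        · exact Prod.ext h5.symm rfl
    rw [hb, Finset.card_powersetCard, hD.2.2]
  rw [Finset.sum_congr rfl hfib, Finset.sum_const, smul_eq_mul]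

lemma card_line_points [Fintype F]
    (hL : ∀ i, L i = Submodule.span F {P i, Q i})
    (hgen : ∀ T : Finset (Fin m ⊕ Fin m), T.card ≤ k →
      LinearIndependent F (fun t : {x // x ∈ T} => Sum.elim P Q (t : Fin m ⊕ Fin m)))
    (hk4 : 4 ≤ k)
    (ΩF : Finset (Pt F k)) (hΩF : ∀ x, x ∈ ΩF ↔ ∃ i, x.submodule ≤ L i) (i : Fin m) :
    (ΩF.filter (fun x => x.submodule ≤ L i)).card = Fintype.card F + 1 := by
  have h1 : ΩF.filter (fun x => x.submodule ≤ L i)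
      = Finset.univ.filter (fun x : Pt F k => x.submodule ≤ L i) := by
    ext x
    simp only [Finset.mem_filter, Finset.mem_univ, true_and]
    constructor
    · exact fun h => h.2
    · exact fun h => ⟨(hΩF x).mpr ⟨i, h⟩, h⟩
  rw [h1, card_proj_eq, finrank_line hL hgen hk4 i]
  rw [Finset.sum_range_succ, Finset.sum_range_succ, Finset.range_zero, Finset.sum_empty]
  simp [add_comm]
end Geom
end S17Aux

/-- for `s ≥ 2`, `0 < c < 1` and `p = c·Q^{-(s-2)/(s-1)}`:
(a) `E[V_i] ≥ c·Q^{1/(s-1)}`; (b) `E[X_m] ≤ c^s·binom(m,s)·Q^{1/(s-1)}`;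
(c) `E[X] ≤ c^s·binom(m,s)·Q^{1/(s-1)} + 3^m·Q^{-1/(s-1)}`. -/
theorem statement17 [Fintype F] {m k s : ℕ} (hm : 2 ≤ m) (hk4 : 4 ≤ k)
    (hkm : k + 1 ≤ 2 * m) (hmk : m ≤ k) (hs : k + s = 2 * m) (hs2 : 2 ≤ s)
    (P Q : Fin m → (Fin k → F))
    (hgen : ∀ T : Finset (Fin m ⊕ Fin m), T.card ≤ k →
      LinearIndependent F (fun t : {x // x ∈ T} => Sum.elim P Q (t : Fin m ⊕ Fin m)))
    (L : Fin m → Submodule F (Fin k → F))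
    (hL : ∀ i, L i = Submodule.span F {P i, Q i})
    (ΩF : Finset (Pt F k)) (hΩF : ∀ x, x ∈ ΩF ↔ ∃ i, x.submodule ≤ L i)
    (Qr : ℝ) (hQr : Qr = (Fintype.card F : ℝ) + 1)
    (c : ℝ) (hc0 : 0 < c) (hc1 : c < 1)
    (p : ℝ) (hp : p = c * Qr ^ (-(((s : ℝ) - 2) / ((s : ℝ) - 1))))
    (hp0 : 0 < p) (hp1 : p < 1) :
    (∀ i, c * Qr ^ ((1 : ℝ) / ((s : ℝ) - 1))
        ≤ expec p ΩF (fun Γ => (Vline (L i) Γ : ℝ))) ∧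
    (expec p ΩF (fun Γ => (Xu L m Γ : ℝ))
        ≤ c ^ s * (m.choose s : ℝ) * Qr ^ ((1 : ℝ) / ((s : ℝ) - 1))) ∧
    (expec p ΩF (fun Γ => (Xtot L Γ : ℝ))
        ≤ c ^ s * (m.choose s : ℝ) * Qr ^ ((1 : ℝ) / ((s : ℝ) - 1))
          + 3 ^ m * Qr ^ (-(1 : ℝ) / ((s : ℝ) - 1))) := by
  classical
  have hq2 : 2 ≤ Fintype.card F := Fintype.one_lt_card
  have hQr2 : (2:ℝ) ≤ Qr := by
    rw [hQr]
    have : (2:ℝ) ≤ (Fintype.card F : ℝ) := by exact_mod_cast hq2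
    linarith
  have hQr0 : (0:ℝ) < Qr := by linarith
  have hQr1 : (1:ℝ) < Qr := by linarith
  have hσ2 : (2:ℝ) ≤ (s:ℝ) := by exact_mod_cast hs2
  have hσ1 : (0:ℝ) < (s:ℝ) - 1 := by linarith
  set e : ℝ := -(((s : ℝ) - 2) / ((s : ℝ) - 1)) with he
  -- the fundamental power computation
  have hpow : ∀ t : ℕ, 1 ≤ t →
      ((((Fintype.card F) + 1) ^ (t - 1) : ℕ) : ℝ) * p ^ t
        = c ^ t * Qr ^ (((t : ℝ) - 1) + e * t) := by
    intro t ht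
    have h1 : ((((Fintype.card F) + 1) ^ (t - 1) : ℕ) : ℝ) = Qr ^ (((t : ℝ)) - 1) := by
      push_cast
      rw [← hQr, ← Real.rpow_natCast Qr (t - 1)]
      congr 1
      push_cast [Nat.cast_sub ht]
      ring
    have h2 : p ^ t = c ^ t * Qr ^ (e * t) := by
      rw [hp, mul_pow]
      congr 1
      rw [← Real.rpow_natCast (Qr ^ e) t, ← Real.rpow_mul hQr0.le]
    rw [h1, h2, Real.rpow_add hQr0]
    ring
  -- the key bound for E[X_u]
  have key : ∀ u : ℕ, k + 1 ≤ 2 * u →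
      expec p ΩF (fun Γ => (Xu L u Γ : ℝ))
        ≤ ((m.choose u * (u.choose (2 * u - k)) * ((Fintype.card F) + 1) ^ (2 * u - k - 1) : ℕ) : ℝ)
            * p ^ (2 * u - k) := by
    intro u hu
    rw [S17Aux.expec_Xu_eq ΩF hΩF p u, S17Aux.card_pairs ΩF u]
    refine mul_le_mul_of_nonneg_right ?_ (le_of_lt (pow_pos hp0 _))
    have h1 := S17Aux.card_circuits_le hL hgen hk4 ΩF u hu
    have h2 := S17Aux.sum_pow_le (Fintype.card F) (2 * u - k) (by omega)
    have h3 : (ΩF.powerset.filter (fun D => CrossingCircuit L D ∧ D.card = u)).card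
          * u.choose (2 * u - k)
        ≤ m.choose u * u.choose (2 * u - k) * ((Fintype.card F) + 1) ^ (2 * u - k - 1) := by
      calc (ΩF.powerset.filter (fun D => CrossingCircuit L D ∧ D.card = u)).card
            * u.choose (2 * u - k)
          ≤ (m.choose u * ∑ i ∈ Finset.range (2 * u - k), (Fintype.card F) ^ i)
              * u.choose (2 * u - k) := Nat.mul_le_mul_right _ h1
        _ ≤ (m.choose u * ((Fintype.card F) + 1) ^ (2 * u - k - 1))
              * u.choose (2 * u - k) := Nat.mul_le_mul_right _ (Nat.mul_le_mul_left _ h2)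
        _ = m.choose u * u.choose (2 * u - k) * ((Fintype.card F) + 1) ^ (2 * u - k - 1) := by
              ring
    exact_mod_cast h3
  -- the exponent identity for the top term
  have hid1 : ((s : ℝ) - 1) + e * s = 1 / ((s : ℝ) - 1) := by
    rw [he]
    field_simp
    ring
  have htm : 2 * m - k = s := by omega
  -- part (b)
  have partb : expec p ΩF (fun Γ => (Xu L m Γ : ℝ))
      ≤ c ^ s * (m.choose s : ℝ) * Qr ^ ((1 : ℝ) / ((s : ℝ) - 1)) := by
    have hb := key m (by omega)
    rw [htm] at hb
    refine le_trans hb (le_of_eq ?_)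
    have hs1 : 1 ≤ s := by omega
    calc ((m.choose m * m.choose s * ((Fintype.card F) + 1) ^ (s - 1) : ℕ) : ℝ) * p ^ s
        = (m.choose s : ℝ) * (((((Fintype.card F) + 1) ^ (s - 1) : ℕ)) : ℝ) * p ^ s := by
          rw [Nat.choose_self]
          push_cast
          ring
      _ = (m.choose s : ℝ) * (c ^ s * Qr ^ (((s : ℝ) - 1) + e * s)) := by
          rw [mul_assoc, hpow s hs1]
      _ = c ^ s * (m.choose s : ℝ) * Qr ^ ((1 : ℝ) / ((s : ℝ) - 1)) := by
          rw [hid1]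
          ring
  refine ⟨?_, partb, ?_⟩
  -- part (a)
  · intro i
    have hVl : ∀ Γ, Γ ⊆ ΩF → ((Vline (L i) Γ : ℝ))
        = ∑ x ∈ ΩF.filter (fun x => x.submodule ≤ L i),
            (if ({x} : Finset (Pt F k)) ⊆ Γ then (1:ℝ) else 0) := by
      intro Γ hΓ
      have h2 : Γ.filter (fun x => x.submodule ≤ L i)
          = (ΩF.filter (fun x => x.submodule ≤ L i)).filter (fun x => x ∈ Γ) := by
        ext x
        simp only [Finset.mem_filter]
        constructor
        · rintro ⟨h3, h4⟩
          exact ⟨⟨hΓ h3, h4⟩, h3⟩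
        · rintro ⟨⟨_, h4⟩, h5⟩
          exact ⟨h5, h4⟩
      simp only [Vline]
      rw [h2, Finset.card_filter, Nat.cast_sum]
      refine Finset.sum_congr rfl fun x _ => ?_
      by_cases hxΓ : x ∈ Γ
      · simp [hxΓ]
      · simp [hxΓ]
    rw [S17Aux.expec_congr p ΩF hVl,
      S17Aux.expec_sum_ind p ΩF _ (fun x => {x}) (fun x hx => by
        rw [Finset.singleton_subset_iff]
        exact Finset.mem_of_mem_filter x hx)]
    have hsum : ∑ x ∈ ΩF.filter (fun x => x.submodule ≤ L i),
        p ^ ({x} : Finset (Pt F k)).card = ((Fintype.card F : ℝ) + 1) * p := by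
      simp only [Finset.card_singleton, pow_one]
      rw [Finset.sum_const, S17Aux.card_line_points hL hgen hk4 ΩF hΩF i, nsmul_eq_mul]
      push_cast
      ring
    rw [hsum]
    refine le_of_eq ?_
    rw [← hQr, hp]
    rw [show Qr * (c * Qr ^ e) = c * (Qr ^ (1:ℝ) * Qr ^ e) by rw [Real.rpow_one]; ring]
    rw [← Real.rpow_add hQr0]
    congr 1
    congr 1
    rw [he]
    field_simp
    ring
  -- part (c)
  · have hXt : ∀ Γ, (Xtot L Γ : ℝ) = ∑ u ∈ Finset.Icc ((k + 2) / 2) m, (Xu L u Γ : ℝ) := by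
      intro Γ
      rw [Xtot, Nat.cast_sum]
    rw [S17Aux.expec_congr p ΩF (fun Γ _ => hXt Γ), S17Aux.expec_finsum]
    have hmmem : m ∈ Finset.Icc ((k + 2) / 2) m := by
      rw [Finset.mem_Icc]
      omega
    rw [← Finset.sum_erase_add _ _ hmmem]
    have herase : ∀ u ∈ (Finset.Icc ((k + 2) / 2) m).erase m,
        expec p ΩF (fun Γ => (Xu L u Γ : ℝ))
          ≤ ((m.choose u * 2 ^ u : ℕ) : ℝ) * Qr ^ (-(1:ℝ) / ((s : ℝ) - 1)) := by
      intro u hu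
      rw [Finset.mem_erase, Finset.mem_Icc] at hu
      obtain ⟨hune, hlo, hhi⟩ := hu
      have hu2 : k + 1 ≤ 2 * u := by omega
      have ht1 : 1 ≤ 2 * u - k := by omega
      have hts : 2 * u - k + 2 ≤ s := by omega
      have htu : 2 * u - k ≤ u := by omega
      refine le_trans (key u hu2) ?_
      have hch : u.choose (2 * u - k) ≤ 2 ^ u := by
        refine le_trans ?_ (le_of_eq (Nat.sum_range_choose u))
        exact Finset.single_le_sum (f := fun j => u.choose j) (fun j _ => Nat.zero_le _)
          (Finset.mem_range.mpr (by omega))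
      have hexp : (((2 * u - k : ℕ) : ℝ) - 1) + e * ((2 * u - k : ℕ) : ℝ)
          ≤ -(1:ℝ) / ((s : ℝ) - 1) := by
        have hτ : ((2 * u - k : ℕ) : ℝ) + 2 ≤ (s : ℝ) := by exact_mod_cast hts
        have heq : (((2 * u - k : ℕ) : ℝ) - 1) + e * ((2 * u - k : ℕ) : ℝ)
            = (((2 * u - k : ℕ) : ℝ) - (s : ℝ) + 1) / ((s : ℝ) - 1) := by
          rw [he]
          field_simp
          ring
        rw [heq, div_le_div_iff_of_pos_right hσ1]
        linarith
      calc ((m.choose u * (u.choose (2 * u - k)) * ((Fintype.card F) + 1) ^ (2 * u - k - 1) : ℕ) : ℝ)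
            * p ^ (2 * u - k)
          = (m.choose u : ℝ) * (u.choose (2 * u - k) : ℝ)
              * (((((Fintype.card F) + 1) ^ (2 * u - k - 1) : ℕ)) : ℝ) * p ^ (2 * u - k) := by
            push_cast
            ring
        _ = (m.choose u : ℝ) * (u.choose (2 * u - k) : ℝ)
              * (c ^ (2 * u - k) * Qr ^ ((((2 * u - k : ℕ)) : ℝ) - 1 + e * ((2 * u - k : ℕ) : ℝ))) := by
            rw [mul_assoc, hpow _ ht1]
        _ ≤ (m.choose u : ℝ) * (2 ^ u : ℝ)
              * (1 * Qr ^ (-(1:ℝ) / ((s : ℝ) - 1))) := by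
            have h1 : (0:ℝ) ≤ (m.choose u : ℝ) := Nat.cast_nonneg _
            have h2 : (u.choose (2 * u - k) : ℝ) ≤ (2 ^ u : ℝ) := by exact_mod_cast hch
            have h3 : c ^ (2 * u - k) ≤ 1 := pow_le_one₀ hc0.le hc1.le
            have h4 : Qr ^ ((((2 * u - k : ℕ)) : ℝ) - 1 + e * ((2 * u - k : ℕ) : ℝ))
                ≤ Qr ^ (-(1:ℝ) / ((s : ℝ) - 1)) :=
              (Real.rpow_le_rpow_left_iff hQr1).mpr hexp
            have h5 : (0:ℝ) ≤ c ^ (2 * u - k) := pow_nonneg hc0.le _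
            have h6 : (0:ℝ) ≤ Qr ^ ((((2 * u - k : ℕ)) : ℝ) - 1 + e * ((2 * u - k : ℕ) : ℝ)) :=
              (Real.rpow_pos_of_pos hQr0 _).le
            have h7 : (0:ℝ) ≤ (u.choose (2 * u - k) : ℝ) := Nat.cast_nonneg _
            refine mul_le_mul (mul_le_mul le_rfl h2 h7 h1) ?_ (by positivity) (by positivity)
            exact mul_le_mul h3 h4 h6 zero_le_one
        _ = ((m.choose u * 2 ^ u : ℕ) : ℝ) * Qr ^ (-(1:ℝ) / ((s : ℝ) - 1)) := by
            push_cast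
            ring
    have hsum3 : ∑ u ∈ (Finset.Icc ((k + 2) / 2) m).erase m,
        expec p ΩF (fun Γ => (Xu L u Γ : ℝ))
          ≤ (3 ^ m : ℝ) * Qr ^ (-(1:ℝ) / ((s : ℝ) - 1)) := by
      calc ∑ u ∈ (Finset.Icc ((k + 2) / 2) m).erase m,
            expec p ΩF (fun Γ => (Xu L u Γ : ℝ))
          ≤ ∑ u ∈ (Finset.Icc ((k + 2) / 2) m).erase m,
              ((m.choose u * 2 ^ u : ℕ) : ℝ) * Qr ^ (-(1:ℝ) / ((s : ℝ) - 1)) :=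
            Finset.sum_le_sum herase
        _ = ((∑ u ∈ (Finset.Icc ((k + 2) / 2) m).erase m, m.choose u * 2 ^ u : ℕ) : ℝ)
              * Qr ^ (-(1:ℝ) / ((s : ℝ) - 1)) := by
            rw [← Finset.sum_mul, Nat.cast_sum]
        _ ≤ (3 ^ m : ℝ) * Qr ^ (-(1:ℝ) / ((s : ℝ) - 1)) := by
            refine mul_le_mul_of_nonneg_right ?_ (Real.rpow_pos_of_pos hQr0 _).le
            have hsub : (Finset.Icc ((k + 2) / 2) m).erase m ⊆ Finset.range (m + 1) := by
              intro u hu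
              rw [Finset.mem_erase, Finset.mem_Icc] at hu
              rw [Finset.mem_range]
              omega
            have := Finset.sum_le_sum_of_subset (f := fun u => m.choose u * 2 ^ u) hsub
            rw [S17Aux.three_pow m] at this
            exact_mod_cast this
    have := add_le_add hsum3 partb
    linarith
end
end
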